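/- arXiv:1404.5460 — 11 statements merged into one kernel-verified Lean document; each statement's English description precedes it below -/
import Mathlib

section
/- Let p be a prime, d ≥ 1 an integer, and c an integer. Let A be the 3×3 integer matrix A = [[−2d, 0, 0], [0, 2c, p], [0, p, 0]]. Then the cokernel ℤ³/(A·ℤ³) is isomorphic, as an abelian group, to ℤ/2dℤ ⊕ ℤ/p²ℤ if p is odd and p ∤ c, and is isomorphic to ℤ/2dℤ ⊕ ℤ/pℤ ⊕ ℤ/pℤ if p ∣ c or p = 2. -/
set_option maxHeartbeats 1000000 in
/-- For a prime `p`, an integer `d ≥ 1` and an integer `c`, the cokernel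
of the matrix `A = [[−2d, 0, 0], [0, 2c, p], [0, p, 0]]` acting on `ℤ³` is isomorphic to
`ℤ/2d ⊕ ℤ/p²` if `p` is odd and `p ∤ c`, and to `ℤ/2d ⊕ ℤ/p ⊕ ℤ/p` if `p ∣ c` or `p = 2`. -/
theorem discriminant_group_i_eq_zero (p : ℕ) (hp : p.Prime) (d : ℕ) (hd : 1 ≤ d) (c : ℤ)
    (A : Matrix (Fin 3) (Fin 3) ℤ)
    (hA : A = !![-(2 * (d : ℤ)), 0, 0; 0, 2 * c, (p : ℤ); 0, (p : ℤ), 0]) :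
    (Odd p ∧ ¬ ((p : ℤ) ∣ c) →
      Nonempty (((Fin 3 → ℤ) ⧸ LinearMap.range A.mulVecLin) ≃+
        (ZMod (2 * d) × ZMod (p ^ 2)))) ∧
    ((p : ℤ) ∣ c ∨ p = 2 →
      Nonempty (((Fin 3 → ℤ) ⧸ LinearMap.range A.mulVecLin) ≃+
        (ZMod (2 * d) × ZMod p × ZMod p))) := by
  subst hA
  have h2d : NeZero (2 * d) := ⟨by omega⟩
  have hpI : Prime (p : ℤ) := Nat.prime_iff_prime_int.mp hp
  have hp2 : NeZero (p ^ 2) := ⟨pow_ne_zero _ hp.ne_zero⟩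
  have hpnz : NeZero p := ⟨hp.ne_zero⟩
  constructor
  · rintro ⟨hodd, hpc⟩
    have hp2' : p ≠ 2 := by rintro rfl; exact (Nat.not_odd_iff_even.mpr even_two) hodd
    have hnd2c : ¬ ((p : ℤ) ∣ 2 * c) := by
      intro h
      rcases hpI.dvd_mul.mp h with h | h
      · have : (p : ℤ) ∣ ((2 : ℕ) : ℤ) := by exact_mod_cast h
        have h2 := Int.ofNat_dvd.mp this
        have := Nat.le_of_dvd (by norm_num) h2
        have := hp.two_le
        omega
      · exact hpc h
    have hcop : IsCoprime (2 * c) ((p : ℤ) ^ 2) :=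
      ((hpI.coprime_iff_not_dvd.mpr hnd2c).symm).pow_right
    set f : (Fin 3 → ℤ) →ₗ[ℤ] ZMod (2 * d) × ZMod (p ^ 2) :=
      { toFun := fun x => ((x 0 : ZMod (2 * d)),
          (((p : ℤ) * x 1 - 2 * c * x 2 : ℤ) : ZMod (p ^ 2)))
        map_add' := by
          intro x y
          simp only [Pi.add_apply, Prod.mk_add_mk, Prod.mk.injEq]
          constructor <;> push_cast <;> ring
        map_smul' := by
          intro r x
          simp only [Pi.smul_apply, smul_eq_mul, RingHom.id_apply, Prod.smul_mk,
            zsmul_eq_mul, Prod.mk.injEq]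
          constructor <;> push_cast <;> ring } with hf
    have hsurj : Function.Surjective f := by
      rintro ⟨α, β⟩
      obtain ⟨u, v, huv⟩ := hcop
      refine ⟨![(ZMod.cast α : ℤ), 0, -(u * (ZMod.cast β : ℤ))], ?_⟩
      simp only [hf, LinearMap.coe_mk, AddHom.coe_mk, Matrix.cons_val_zero,
        Matrix.cons_val_one, Matrix.head_cons, Prod.mk.injEq]
      have key : ((2 * c * u : ℤ) : ZMod (p ^ 2)) = 1 := by
        have h1 : (2 * c * u : ℤ) = 1 - ((p ^ 2 : ℕ) : ℤ) * v := by push_cast; linarith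
        rw [h1, Int.cast_sub, Int.cast_mul, Int.cast_one, Int.cast_natCast,
          ZMod.natCast_self, zero_mul, sub_zero]
      refine ⟨ZMod.intCast_zmod_cast α, ?_⟩
      have : (((p : ℤ) * 0 - 2 * c * -(u * (ZMod.cast β : ℤ)) : ℤ) : ZMod (p ^ 2))
          = ((2 * c * u : ℤ) : ZMod (p ^ 2)) * (((ZMod.cast β : ℤ)) : ZMod (p ^ 2)) := by
        push_cast; ring
      rw [Matrix.cons_val_two]
      simp only [Matrix.tail_cons, Matrix.head_cons]
      rw [this, key, one_mul, ZMod.intCast_zmod_cast]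
    have hker : LinearMap.ker f
        = LinearMap.range (!![-(2 * (d : ℤ)), 0, 0; 0, 2 * c, (p : ℤ); 0, (p : ℤ), 0]).mulVecLin := by
      ext x
      simp only [LinearMap.mem_ker, LinearMap.mem_range, Matrix.mulVecLin_apply, hf,
        LinearMap.coe_mk, AddHom.coe_mk, Prod.ext_iff, Prod.fst_zero, Prod.snd_zero,
        Prod.mk.injEq]
      constructor
      · rintro ⟨h1, h2⟩
        have hd1 : ((2 * d : ℕ) : ℤ) ∣ x 0 := (ZMod.intCast_zmod_eq_zero_iff_dvd _ _).mp h1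
        have hd2 : ((p ^ 2 : ℕ) : ℤ) ∣ (p : ℤ) * x 1 - 2 * c * x 2 :=
          (ZMod.intCast_zmod_eq_zero_iff_dvd _ _).mp h2
        push_cast at hd1 hd2
        obtain ⟨t, ht⟩ := hd1
        have hpx2 : (p : ℤ) ∣ x 2 := by
          have hpd : (p : ℤ) ∣ 2 * c * x 2 := by
            have : (p : ℤ) ∣ (p : ℤ) * x 1 - 2 * c * x 2 := dvd_trans ⟨p, (sq (p:ℤ))⟩ hd2
            obtain ⟨k, hk⟩ := this
            exact ⟨x 1 - k, by linarith⟩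
          rcases hpI.dvd_mul.mp hpd with h | h
          · exact absurd h hnd2c
          · exact h
        obtain ⟨y, hy⟩ := hpx2
        have hz : (p : ℤ) ∣ x 1 - 2 * c * y := by
          obtain ⟨k, hk⟩ := hd2
          refine ⟨k, ?_⟩
          have hpne : (p : ℤ) ≠ 0 := by exact_mod_cast hp.ne_zero
          have : (p : ℤ) * (x 1 - 2 * c * y) = (p : ℤ) * ((p : ℤ) * k) := by
            rw [hy] at hk; ring_nf; ring_nf at hk; nlinarith [hk]
          exact mul_left_cancel₀ hpne this
        obtain ⟨z, hzz⟩ := hz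
        refine ⟨![-t, y, z], ?_⟩
        funext i
        fin_cases i <;>
          simp [Matrix.mulVec, dotProduct, Fin.sum_univ_three] <;> linarith
      · rintro ⟨u, rfl⟩
        have e0 : ((!![-(2 * (d : ℤ)), 0, 0; 0, 2 * c, (p : ℤ); 0, (p : ℤ), 0]).mulVec u) 0
            = -(2 * (d : ℤ)) * u 0 := by
          simp [Matrix.mulVec, dotProduct, Fin.sum_univ_three]
        have e1 : ((!![-(2 * (d : ℤ)), 0, 0; 0, 2 * c, (p : ℤ); 0, (p : ℤ), 0]).mulVec u) 1
            = 2 * c * u 1 + (p : ℤ) * u 2 := by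
          simp [Matrix.mulVec, dotProduct, Fin.sum_univ_three]
        have e2 : ((!![-(2 * (d : ℤ)), 0, 0; 0, 2 * c, (p : ℤ); 0, (p : ℤ), 0]).mulVec u) 2
            = (p : ℤ) * u 1 := by
          simp [Matrix.mulVec, dotProduct, Fin.sum_univ_three]
        rw [e0, e1, e2]
        constructor
        · exact (ZMod.intCast_zmod_eq_zero_iff_dvd _ _).mpr ⟨-(u 0), by push_cast; ring⟩
        · exact (ZMod.intCast_zmod_eq_zero_iff_dvd _ _).mpr ⟨u 2, by push_cast; ring⟩
    exact ⟨((Submodule.quotEquivOfEq _ _ hker.symm).trans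
      (f.quotKerEquivOfSurjective hsurj)).toAddEquiv⟩
  · intro hcase
    have hpd2c : (p : ℤ) ∣ 2 * c := by
      rcases hcase with hc | rfl
      · exact Dvd.dvd.mul_left hc 2
      · push_cast; exact ⟨c, rfl⟩
    obtain ⟨m, hm⟩ := hpd2c
    set f : (Fin 3 → ℤ) →ₗ[ℤ] ZMod (2 * d) × ZMod p × ZMod p :=
      { toFun := fun x => ((x 0 : ZMod (2 * d)), (x 1 : ZMod p), (x 2 : ZMod p))
        map_add' := by
          intro x y
          simp only [Pi.add_apply, Prod.mk_add_mk, Prod.mk.injEq]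
          refine ⟨by push_cast; ring, by push_cast; ring, by push_cast; ring⟩
        map_smul' := by
          intro r x
          simp only [Pi.smul_apply, smul_eq_mul, RingHom.id_apply, Prod.smul_mk,
            zsmul_eq_mul, Prod.mk.injEq]
          refine ⟨by push_cast; ring, by push_cast; ring, by push_cast; ring⟩ } with hf
    have hsurj : Function.Surjective f := by
      rintro ⟨α, β, γ⟩
      refine ⟨![(ZMod.cast α : ℤ), (ZMod.cast β : ℤ), (ZMod.cast γ : ℤ)], ?_⟩
      simp only [hf, LinearMap.coe_mk, AddHom.coe_mk, Matrix.cons_val_zero,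
        Matrix.cons_val_one, Matrix.head_cons, Prod.mk.injEq]
      rw [Matrix.cons_val_two]
      simp only [Matrix.tail_cons, Matrix.head_cons]
      exact ⟨ZMod.intCast_zmod_cast α, ZMod.intCast_zmod_cast β, ZMod.intCast_zmod_cast γ⟩
    have hker : LinearMap.ker f
        = LinearMap.range (!![-(2 * (d : ℤ)), 0, 0; 0, 2 * c, (p : ℤ); 0, (p : ℤ), 0]).mulVecLin := by
      ext x
      simp only [LinearMap.mem_ker, LinearMap.mem_range, Matrix.mulVecLin_apply, hf,
        LinearMap.coe_mk, AddHom.coe_mk, Prod.ext_iff, Prod.fst_zero, Prod.snd_zero,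
        Prod.mk.injEq]
      constructor
      · rintro ⟨h1, h2, h3⟩
        have hd1 : ((2 * d : ℕ) : ℤ) ∣ x 0 := (ZMod.intCast_zmod_eq_zero_iff_dvd _ _).mp h1
        have hd2 : ((p : ℕ) : ℤ) ∣ x 1 := (ZMod.intCast_zmod_eq_zero_iff_dvd _ _).mp h2
        have hd3 : ((p : ℕ) : ℤ) ∣ x 2 := (ZMod.intCast_zmod_eq_zero_iff_dvd _ _).mp h3
        push_cast at hd1 hd2 hd3
        obtain ⟨t, ht⟩ := hd1
        obtain ⟨a, ha⟩ := hd2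
        obtain ⟨b, hb⟩ := hd3
        refine ⟨![-t, b, a - m * b], ?_⟩
        funext i
        fin_cases i
        · simp only [Matrix.mulVec, dotProduct, Fin.sum_univ_three]
          simp [Matrix.vecHead, Matrix.vecTail]
          linarith
        · simp only [Matrix.mulVec, dotProduct, Fin.sum_univ_three]
          simp [Matrix.vecHead, Matrix.vecTail]
          linear_combination b * hm - ha
        · simp only [Matrix.mulVec, dotProduct, Fin.sum_univ_three]
          simp [Matrix.vecHead, Matrix.vecTail]
          linarith
      · rintro ⟨u, rfl⟩
        have e0 : ((!![-(2 * (d : ℤ)), 0, 0; 0, 2 * c, (p : ℤ); 0, (p : ℤ), 0]).mulVec u) 0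
            = -(2 * (d : ℤ)) * u 0 := by
          simp [Matrix.mulVec, dotProduct, Fin.sum_univ_three]
        have e1 : ((!![-(2 * (d : ℤ)), 0, 0; 0, 2 * c, (p : ℤ); 0, (p : ℤ), 0]).mulVec u) 1
            = 2 * c * u 1 + (p : ℤ) * u 2 := by
          simp [Matrix.mulVec, dotProduct, Fin.sum_univ_three]
        have e2 : ((!![-(2 * (d : ℤ)), 0, 0; 0, 2 * c, (p : ℤ); 0, (p : ℤ), 0]).mulVec u) 2
            = (p : ℤ) * u 1 := by
          simp [Matrix.mulVec, dotProduct, Fin.sum_univ_three]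
        rw [e0, e1, e2]
        refine ⟨(ZMod.intCast_zmod_eq_zero_iff_dvd _ _).mpr ⟨-(u 0), by push_cast; ring⟩,
          (ZMod.intCast_zmod_eq_zero_iff_dvd _ _).mpr ⟨m * u 1 + u 2, by push_cast; rw [hm]; ring⟩,
          (ZMod.intCast_zmod_eq_zero_iff_dvd _ _).mpr ⟨u 1, by push_cast; ring⟩⟩
    exact ⟨((Submodule.quotEquivOfEq _ _ hker.symm).trans
      (f.quotKerEquivOfSurjective hsurj)).toAddEquiv⟩
end

section
/- Let p be a prime, d ≥ 1 an integer, and c an integer. Let A be the 3×3 integer matrix A = [[−2d, −1, 0], [−1, 2c, p], [0, p, 0]]. Then the cokernel ℤ³/(A·ℤ³) is isomorphic, as an abelian group, to ℤ/2dp²ℤ if p ∤ (1 + 4cd), and is isomorphic to ℤ/2dpℤ ⊕ ℤ/pℤ if p ∣ (1 + 4cd). -/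
open Matrix

lemma coker_equiv_aux (A U V U' V' : Matrix (Fin 3) (Fin 3) ℤ)
    (hU : U * U' = 1) (hU' : U' * U = 1) (hV : V * V' = 1)
    (m n : ℕ) (hD : U * A * V = Matrix.diagonal ![1, (m : ℤ), (n : ℤ)]) :
    Nonempty (((Fin 3 → ℤ) ⧸ LinearMap.range A.mulVecLin) ≃+ (ZMod m × ZMod n)) := by
  set D : Matrix (Fin 3) (Fin 3) ℤ := Matrix.diagonal ![1, (m : ℤ), (n : ℤ)] with hDdef
  -- linear equivalence from U
  let e : (Fin 3 → ℤ) ≃ₗ[ℤ] (Fin 3 → ℤ) :=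
    LinearEquiv.ofLinear U.mulVecLin U'.mulVecLin
      (by rw [← Matrix.mulVecLin_mul, hU, Matrix.mulVecLin_one])
      (by rw [← Matrix.mulVecLin_mul, hU', Matrix.mulVecLin_one])
  have hVsurj : LinearMap.range V.mulVecLin = ⊤ := by
    rw [LinearMap.range_eq_top]
    intro x
    exact ⟨V'.mulVec x, by simp [Matrix.mulVecLin_apply, Matrix.mulVec_mulVec, hV]⟩
  have hmap : (LinearMap.range A.mulVecLin).map (e : (Fin 3 → ℤ) →ₗ[ℤ] (Fin 3 → ℤ))
      = LinearMap.range D.mulVecLin := by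
    rw [← hD, mul_assoc, Matrix.mulVecLin_mul, LinearMap.range_comp,
      Matrix.mulVecLin_mul, LinearMap.range_comp, hVsurj, Submodule.map_top]
    rfl
  let q1 : ((Fin 3 → ℤ) ⧸ LinearMap.range A.mulVecLin) ≃ₗ[ℤ]
      ((Fin 3 → ℤ) ⧸ LinearMap.range D.mulVecLin) :=
    Submodule.Quotient.equiv _ _ e hmap
  -- the map to ZMod m × ZMod n
  let φ : (Fin 3 → ℤ) →ₗ[ℤ] ZMod m × ZMod n :=
    LinearMap.prod
      ((Int.castAddHom (ZMod m)).toIntLinearMap ∘ₗ LinearMap.proj 1)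
      ((Int.castAddHom (ZMod n)).toIntLinearMap ∘ₗ LinearMap.proj 2)
  have hφ : ∀ x : Fin 3 → ℤ, φ x = (((x 1 : ℤ) : ZMod m), ((x 2 : ℤ) : ZMod n)) := fun x => rfl
  have hsurj : Function.Surjective φ := by
    rintro ⟨a, b⟩
    obtain ⟨x, hx⟩ := ZMod.intCast_surjective (n := m) a
    obtain ⟨y, hy⟩ := ZMod.intCast_surjective (n := n) b
    exact ⟨![0, x, y], by simp [hφ, hx, hy]⟩
  have hker : LinearMap.range D.mulVecLin = LinearMap.ker φ := by
    ext x
    constructor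
    · rintro ⟨y, rfl⟩
      simp only [LinearMap.mem_ker, hφ, Matrix.mulVecLin_apply]
      rw [Matrix.mulVec_diagonal, Matrix.mulVec_diagonal]
      simp [Prod.ext_iff]
    · intro hx
      rw [LinearMap.mem_ker, hφ, Prod.mk_eq_zero] at hx
      obtain ⟨h1, h2⟩ := hx
      rw [ZMod.intCast_zmod_eq_zero_iff_dvd] at h1 h2
      obtain ⟨y1, hy1⟩ := h1
      obtain ⟨y2, hy2⟩ := h2
      refine ⟨![x 0, y1, y2], ?_⟩
      funext i
      fin_cases i <;>
        simp [hDdef, Matrix.mulVecLin_apply, Matrix.mulVec_diagonal, hy1, hy2]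
  exact ⟨(q1.trans ((Submodule.quotEquivOfEq _ _ hker).trans
    (φ.quotKerEquivOfSurjective hsurj))).toAddEquiv⟩

lemma diag3 (a b c : ℤ) :
    Matrix.diagonal ![a, b, c] = !![a, 0, 0; 0, b, 0; 0, 0, c] := by
  ext i j
  fin_cases i <;> fin_cases j <;> rfl

/-- For a prime `p`, an integer `d ≥ 1` and an integer `c`, the cokernel
of the matrix `A = [[−2d, −1, 0], [−1, 2c, p], [0, p, 0]]` acting on `ℤ³` is isomorphic to
`ℤ/2dp²` if `p ∤ (1 + 4cd)`, and to `ℤ/2dp ⊕ ℤ/p` if `p ∣ (1 + 4cd)`. -/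
theorem discriminant_group_i_eq_one (p : ℕ) (hp : p.Prime) (d : ℕ) (hd : 1 ≤ d) (c : ℤ)
    (A : Matrix (Fin 3) (Fin 3) ℤ)
    (hA : A = !![-(2 * (d : ℤ)), -1, 0; -1, 2 * c, (p : ℤ); 0, (p : ℤ), 0]) :
    (¬ ((p : ℤ) ∣ (1 + 4 * c * (d : ℤ))) →
      Nonempty (((Fin 3 → ℤ) ⧸ LinearMap.range A.mulVecLin) ≃+ ZMod (2 * d * p ^ 2))) ∧
    ((p : ℤ) ∣ (1 + 4 * c * (d : ℤ)) →
      Nonempty (((Fin 3 → ℤ) ⧸ LinearMap.range A.mulVecLin) ≃+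
        (ZMod (2 * d * p) × ZMod p))) := by
  have hpZ : Prime ((p : ℤ)) := Nat.prime_iff_prime_int.mp hp
  constructor
  · intro hndvd
    obtain ⟨s, t, hst⟩ : IsCoprime ((p : ℤ)) (1 + 4 * c * (d : ℤ)) :=
      (Prime.coprime_iff_not_dvd hpZ).mpr hndvd
    have hU : (!![1, 0, 0; 2*c, 1, 0; 4*c*(d:ℤ)*t*p - p, 2*d*t*p, -1] *
        !![1, 0, 0; -(2*c), 1, 0; -(p:ℤ), 2*d*t*p, -1]) = 1 := by
      rw [Matrix.mul_fin_three, Matrix.one_fin_three]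
      exact congrArg _ (Matrix.vec3_eq
        (Matrix.vec3_eq (by ring) (by ring) (by ring))
        (Matrix.vec3_eq (by ring) (by ring) (by ring))
        (Matrix.vec3_eq (by ring) (by ring) (by ring)))
    have hU' : (!![1, 0, 0; -(2*c), 1, 0; -(p:ℤ), 2*d*t*p, -1] *
        !![1, 0, 0; 2*c, 1, 0; 4*c*(d:ℤ)*t*p - p, 2*d*t*p, -1]) = 1 := by
      rw [Matrix.mul_fin_three, Matrix.one_fin_three]
      exact congrArg _ (Matrix.vec3_eq
        (Matrix.vec3_eq (by ring) (by ring) (by ring))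
        (Matrix.vec3_eq (by ring) (by ring) (by ring))
        (Matrix.vec3_eq (by ring) (by ring) (by ring)))
    have hV : (!![0, -t, (p:ℤ); -1, 2*d*t, -(2*d*p); 0, s, 1 + 4*c*(d:ℤ)] *
        !![-(2*(d:ℤ)), -1, 0; -(1 + 4*c*(d:ℤ)), 0, (p:ℤ); s, 0, t]) = 1 := by
      rw [Matrix.mul_fin_three, Matrix.one_fin_three]
      exact congrArg _ (Matrix.vec3_eq
        (Matrix.vec3_eq (by linear_combination hst) (by ring) (by ring))
        (Matrix.vec3_eq (by linear_combination (-(2*(d:ℤ))) * hst) (by ring) (by ring))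
        (Matrix.vec3_eq (by ring) (by ring) (by linear_combination hst)))
    have hD : (!![1, 0, 0; 2*c, 1, 0; 4*c*(d:ℤ)*t*p - p, 2*d*t*p, -1] * A *
        !![0, -t, (p:ℤ); -1, 2*d*t, -(2*d*p); 0, s, 1 + 4*c*(d:ℤ)]) =
        Matrix.diagonal ![1, ((1:ℕ) : ℤ), ((2*d*p^2 : ℕ) : ℤ)] := by
      rw [hA, Matrix.mul_fin_three, Matrix.mul_fin_three, diag3]
      refine congrArg _ (Matrix.vec3_eq
        (Matrix.vec3_eq ?_ ?_ ?_) (Matrix.vec3_eq ?_ ?_ ?_)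
        (Matrix.vec3_eq ?_ ?_ ?_)) <;> (try push_cast) <;>
        first
          | ring1
          | linear_combination hst
          | linear_combination (2*(d:ℤ)*t*p) * hst
    obtain ⟨q⟩ := coker_equiv_aux A _ _ _ _ hU hU' hV 1 (2*d*p^2) hD
    exact ⟨q.trans AddEquiv.uniqueProd⟩
  · intro hdvd
    obtain ⟨m0, hm0⟩ := hdvd
    have hU : (!![1, 0, 0; (p:ℤ), 0, 1; 2*c, 1, 0] *
        !![1, 0, 0; -(2*c), 0, 1; -(p:ℤ), 1, 0]) = 1 := by
      rw [Matrix.mul_fin_three, Matrix.one_fin_three]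
      exact congrArg _ (Matrix.vec3_eq
        (Matrix.vec3_eq (by ring) (by ring) (by ring))
        (Matrix.vec3_eq (by ring) (by ring) (by ring))
        (Matrix.vec3_eq (by ring) (by ring) (by ring)))
    have hU' : (!![1, 0, 0; -(2*c), 0, 1; -(p:ℤ), 1, 0] *
        !![1, 0, 0; (p:ℤ), 0, 1; 2*c, 1, 0]) = 1 := by
      rw [Matrix.mul_fin_three, Matrix.one_fin_three]
      exact congrArg _ (Matrix.vec3_eq
        (Matrix.vec3_eq (by ring) (by ring) (by ring))
        (Matrix.vec3_eq (by ring) (by ring) (by ring))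
        (Matrix.vec3_eq (by ring) (by ring) (by ring)))
    have hV : (!![0, -1, 0; -1, 2*(d:ℤ), 0; 0, -m0, 1] *
        !![-(2*(d:ℤ)), -1, 0; -1, 0, 0; -m0, 0, 1]) = 1 := by
      rw [Matrix.mul_fin_three, Matrix.one_fin_three]
      exact congrArg _ (Matrix.vec3_eq
        (Matrix.vec3_eq (by ring) (by ring) (by ring))
        (Matrix.vec3_eq (by ring) (by ring) (by ring))
        (Matrix.vec3_eq (by ring) (by ring) (by ring)))
    have hD : (!![1, 0, 0; (p:ℤ), 0, 1; 2*c, 1, 0] * A *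
        !![0, -1, 0; -1, 2*(d:ℤ), 0; 0, -m0, 1]) =
        Matrix.diagonal ![1, ((2*d*p : ℕ) : ℤ), ((p : ℕ) : ℤ)] := by
      rw [hA, Matrix.mul_fin_three, Matrix.mul_fin_three, diag3]
      refine congrArg _ (Matrix.vec3_eq
        (Matrix.vec3_eq ?_ ?_ ?_) (Matrix.vec3_eq ?_ ?_ ?_)
        (Matrix.vec3_eq ?_ ?_ ?_)) <;> (try push_cast) <;>
        first
          | ring1
          | linear_combination hm0
    exact coker_equiv_aux A _ _ _ _ hU hU' hV (2*d*p) p hD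
end

section
/- Let p be an odd prime, let d ≥ 1 be an integer, and let c, c′ be integers such that p does not divide (1 + 4cd)(1 + 4c′d). Then there exists an integer x with gcd(x, 2dp) = 1 such that 4dp² divides (1 + 4cd) − x²(1 + 4c′d), if and only if there exists an integer y such that p divides (1 + 4cd) − y²(1 + 4c′d). -/
/-- Hensel-type lifting of square solutions modulo powers of an odd prime. -/
lemma lift_square (p : ℕ) (hp : p.Prime) (hodd : Odd p) (a b : ℤ)
    (ha : ¬ (p:ℤ) ∣ a) (hb : ¬ (p:ℤ) ∣ b) (y : ℤ)
    (hy : (p:ℤ) ∣ a - y^2*b) :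
    ∀ n : ℕ, 1 ≤ n → ∃ x : ℤ, (p:ℤ)^n ∣ a - x^2*b := by
  haveI : Fact p.Prime := ⟨hp⟩
  have hp2 : p ≠ 2 := by rintro rfl; exact (Nat.not_odd_iff_even.mpr even_two) hodd
  have hpZ : Prime (p:ℤ) := Int.prime_iff_natAbs_prime.mpr (by simpa using hp)
  have key : ∀ z : ℤ, (p:ℤ) ∣ a - z^2*b → ¬ (p:ℤ) ∣ z := by
    intro z hz hdz
    exact ha (by have : (p:ℤ) ∣ z^2*b := Dvd.dvd.mul_right (hdz.pow (by norm_num)) b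
                 have := dvd_add hz this; simpa using this)
  intro n hn
  induction n with
  | zero => omega
  | succ n ih =>
    rcases Nat.eq_or_lt_of_le hn with h1 | h1
    · exact ⟨y, by rw [← h1]; simpa using hy⟩
    have hn1 : 1 ≤ n := by omega
    obtain ⟨x, hx⟩ := ih hn1
    have hpx : ¬ (p:ℤ) ∣ x := key x ((dvd_pow_self (p:ℤ) (by omega : n ≠ 0)).trans hx)
    obtain ⟨k, hk⟩ := hx
    -- choose t ≡ k / (2xb) mod p
    have hu : ((2*x*b : ℤ) : ZMod p) ≠ 0 := by
      rw [Ne, ZMod.intCast_zmod_eq_zero_iff_dvd]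
      intro hdvd
      rcases (hpZ.dvd_mul.mp hdvd) with h | h
      · rcases hpZ.dvd_mul.mp h with h | h
        · have : (p:ℤ) ∣ (2:ℤ) := h
          have : p ∣ 2 := by exact_mod_cast this
          exact hp2 ((Nat.prime_dvd_prime_iff_eq hp Nat.prime_two).mp this)
        · exact hpx h
      · exact hb h
    set t : ℤ := (((k : ZMod p) * ((2*x*b : ℤ) : ZMod p)⁻¹).val : ℤ) with ht
    have hdt : (p:ℤ) ∣ k - 2*x*b*t := by
      rw [← ZMod.intCast_zmod_eq_zero_iff_dvd]
      have htc : ((t : ℤ) : ZMod p) = (k : ZMod p) * ((2*x*b : ℤ) : ZMod p)⁻¹ := by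
        rw [ht, Int.cast_natCast, ZMod.natCast_val, ZMod.cast_id]
      have hsplit : ((k - 2*x*b*t : ℤ) : ZMod p)
          = (k : ZMod p) - ((2*x*b : ℤ) : ZMod p) * ((t : ℤ) : ZMod p) := by
        push_cast; ring
      rw [hsplit, htc]
      linear_combination (-(k : ZMod p)) * mul_inv_cancel₀ hu
    refine ⟨x + (p:ℤ)^n * t, ?_⟩
    have hfac : a - (x + (p:ℤ)^n*t)^2*b
        = (p:ℤ)^n * ((k - 2*x*b*t) - (p:ℤ)^n * (b*t^2)) := by
      have h2n : (p:ℤ)^n * (p:ℤ)^n = (p:ℤ)^(2*n) := by rw [← pow_add]; ring_nf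
      linear_combination hk
    rw [hfac, pow_succ]
    refine mul_dvd_mul dvd_rfl ?_
    exact dvd_sub hdt (Dvd.dvd.mul_right ((dvd_pow_self (p:ℤ) (by omega : n ≠ 0))) _)

/-- Let `p` be an odd prime, `d ≥ 1` an integer, and `c, c'` integers
with `p ∤ (1 + 4cd)(1 + 4c'd)`.  Then the congruence
`(1 + 4cd) ≡ x² (1 + 4c'd) (mod 4dp²)` has a solution in integers `x` coprime to `2dp`
if and only if it has a solution modulo `p`. -/
theorem congruence_reduction_cyclic_case (p : ℕ) (hp : p.Prime) (hodd : Odd p)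
    (d : ℕ) (hd : 1 ≤ d) (c c' : ℤ)
    (hndvd : ¬ ((p : ℤ) ∣ (1 + 4 * c * (d : ℤ)) * (1 + 4 * c' * (d : ℤ)))) :
    (∃ x : ℤ, Int.gcd x (2 * (d : ℤ) * (p : ℤ)) = 1 ∧
        (4 * (d : ℤ) * (p : ℤ) ^ 2) ∣ ((1 + 4 * c * (d : ℤ)) - x ^ 2 * (1 + 4 * c' * (d : ℤ)))) ↔
      (∃ y : ℤ, (p : ℤ) ∣ ((1 + 4 * c * (d : ℤ)) - y ^ 2 * (1 + 4 * c' * (d : ℤ)))) := by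
  set a : ℤ := 1 + 4 * c * (d : ℤ) with ha_def
  set b : ℤ := 1 + 4 * c' * (d : ℤ) with hb_def
  have ha : ¬ (p:ℤ) ∣ a := fun h => hndvd (h.mul_right b)
  have hb : ¬ (p:ℤ) ∣ b := fun h => hndvd (h.mul_left a)
  have key : ∀ z : ℤ, (p:ℤ) ∣ a - z^2*b → ¬ (p:ℤ) ∣ z := by
    intro z hz hdz
    exact ha (by have : (p:ℤ) ∣ z^2*b := Dvd.dvd.mul_right (hdz.pow (by norm_num)) b
                 have := dvd_add hz this; simpa using this)
  constructor
  · rintro ⟨x, _, hx2⟩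
    exact ⟨x, dvd_trans ⟨4*(d:ℤ)*p, by ring⟩ hx2⟩
  · rintro ⟨y, hy⟩
    have hp2 : p ≠ 2 := by rintro rfl; exact (Nat.not_odd_iff_even.mpr even_two) hodd
    have hd0 : d ≠ 0 := by omega
    set k : ℕ := d.factorization p with hk_def
    set m : ℕ := ordCompl[p] d with hm_def
    have hdm : p ^ k * m = d := Nat.ordProj_mul_ordCompl_eq_self d p
    have hpm : ¬ p ∣ m := Nat.not_dvd_ordCompl hp hd0
    have hdmZ : (d:ℤ) = (p:ℤ)^k * (m:ℤ) := by exact_mod_cast (hdm.symm : (d:ℕ) = _)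
    -- solution mod p^(k+2)
    obtain ⟨x₀, hx₀⟩ := lift_square p hp hodd a b ha hb y hy (k+2) (by omega)
    set P : ℤ := (p:ℤ)^(k+2) with hP_def
    -- coprimality of 4m and P
    have hcop : IsCoprime (4*(m:ℤ)) P := by
      have h4 : Nat.Coprime (4*m) p := by
        have : ¬ p ∣ 4*m := by
          intro h
          rcases (Nat.Prime.dvd_mul hp).mp h with h | h
          · have : p ∣ 2*2 := by norm_num at h ⊢; omega
            rcases (Nat.Prime.dvd_mul hp).mp this with h | h <;>
              exact hp2 ((Nat.prime_dvd_prime_iff_eq hp Nat.prime_two).mp h)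
          · exact hpm h
        exact (Nat.coprime_comm.mp ((Nat.Prime.coprime_iff_not_dvd hp).mpr this))
      have := (Nat.isCoprime_iff_coprime.mpr h4).pow_right (n := k+2)
      rw [hP_def]; push_cast at this ⊢; convert this using 2 <;> push_cast <;> ring
    obtain ⟨u, v, huv⟩ := id hcop
    set w : ℤ := u*(x₀-1) with hw_def
    set x : ℤ := 1 + 4*(m:ℤ)*w with hx_def
    have hxx₀ : x - x₀ = (x₀ - 1) * (-(v*P)) := by
      rw [hx_def, hw_def]; linear_combination (x₀ - 1) * huv
    -- P divides a - x^2 b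
    have hPdvd : P ∣ a - x^2*b := by
      obtain ⟨w1, hw1⟩ := hx₀
      refine ⟨w1 - b * (-(x₀-1)*v) * (x + x₀), ?_⟩
      have hx' : x = x₀ + P * (-(x₀-1)*v) := by linear_combination hxx₀
      rw [hx']
      linear_combination hw1
    -- 4m divides a - x^2 b
    have h4mdvd : (4*(m:ℤ)) ∣ a - x^2*b := by
      refine ⟨c*(p:ℤ)^k - c'*(p:ℤ)^k*x^2 - w*(x+1), ?_⟩
      rw [ha_def, hb_def, hdmZ, hx_def]; ring
    have hmul : (4 * (d:ℤ) * (p:ℤ)^2) = (4*(m:ℤ)) * P := by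
      rw [hP_def, hdmZ]; ring
    refine ⟨x, ?_, by rw [hmul]; exact hcop.mul_dvd h4mdvd hPdvd⟩
    -- coprimality of x with 2dp
    have hpx : ¬ (p:ℤ) ∣ x :=
      key x (((dvd_pow_self (p:ℤ) (by omega : k+2 ≠ 0)).trans (by rw [← hP_def]; exact hPdvd)))
    have copxp : IsCoprime x (p:ℤ) := by
      rw [Int.isCoprime_iff_gcd_eq_one]
      have : ¬ (p:ℕ) ∣ x.natAbs := fun h => hpx
        (dvd_trans (by exact_mod_cast Int.natCast_dvd_natCast.mpr h) (Int.natAbs_dvd.mpr dvd_rfl))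
      exact Nat.Coprime.gcd_eq_one (Nat.coprime_comm.mp ((hp.coprime_iff_not_dvd).mpr this))
    have copx2 : IsCoprime x (2:ℤ) := ⟨1, -(2*(m:ℤ)*w), by rw [hx_def]; ring⟩
    have copxm : IsCoprime x (m:ℤ) := ⟨1, -(4*w), by rw [hx_def]; ring⟩
    have copxd : IsCoprime x (d:ℤ) := by
      rw [hdmZ]; exact (copxp.pow_right).mul_right copxm
    rw [← Int.isCoprime_iff_gcd_eq_one]
    exact (copx2.mul_right copxd).mul_right copxp
end

section
/- Let p be an odd prime and let d ≥ 1 be an integer with p ∣ d, and let c, c′ be any integers. Then there exists an integer x with gcd(x, 2dp) = 1 such that 4dp² divides (1 + 4cd) − x²(1 + 4c′d). -/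
/-- Let `p` be an odd prime and `d ≥ 1` with `p ∣ d`; let `c, c'` be any
integers.  Then there is an integer `x` with `gcd(x, 2dp) = 1` such that
`4dp² ∣ (1 + 4cd) − x²(1 + 4c'd)`. -/
theorem congruence_always_solvable_p_dvd_d (p : ℕ) (hp : p.Prime) (hodd : Odd p)
    (d : ℕ) (hd : 1 ≤ d) (hpd : p ∣ d) (c c' : ℤ) :
    ∃ x : ℤ, Int.gcd x (2 * (d : ℤ) * (p : ℤ)) = 1 ∧
      (4 * (d : ℤ) * (p : ℤ) ^ 2) ∣ ((1 + 4 * c * (d : ℤ)) - x ^ 2 * (1 + 4 * c' * (d : ℤ))) := by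
  obtain ⟨m, hm⟩ := hpd
  set P : ℤ := (p : ℤ)
  set M : ℤ := (m : ℤ)
  have hD : (d : ℤ) = P * M := by rw [hm]; push_cast; ring
  set f : ℤ := -M * ((c - c') ^ 2 + 4 * (c - c') * c') with hf
  set e : ℤ := (c - c') + P * f with he
  refine ⟨1 + 2 * e * (d : ℤ), ?_, ?_⟩
  · -- coprimality
    have h1 : IsCoprime (1 + 2 * e * (d : ℤ)) (2 * (d : ℤ)) :=
      ⟨1, -e, by ring⟩
    have h2 : IsCoprime (1 + 2 * e * (d : ℤ)) (2 * (d : ℤ) * (2 * (d : ℤ))) :=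
      h1.mul_right h1
    have hdvd : (2 * (d : ℤ) * P) ∣ (2 * (d : ℤ) * (2 * (d : ℤ))) :=
      ⟨2 * M, by rw [hD]; ring⟩
    exact Int.isCoprime_iff_gcd_eq_one.mp (h2.of_isCoprime_of_dvd_right hdvd)
  · refine ⟨-10*c'^3*M^2 + 15*c'^4*P*M^3 - 36*c'^5*P^2*M^4 + 6*c*c'^2*M^2
      - 28*c*c'^3*P*M^3 + 48*c*c'^4*P^2*M^4 + 2*c^2*c'*M^2 + 10*c^2*c'^2*P*M^3
      + 8*c^2*c'^3*P^2*M^4 + 2*c^3*M^2 + 4*c^3*c'*P*M^3 - 16*c^3*c'^2*P^2*M^4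
      - c^4*P*M^3 - 4*c^4*c'*P^2*M^4, ?_⟩
    rw [hD, he, hf]
    ring
end

section
/- Let p be an odd prime and let d ≥ 1 be an integer with p ∤ d. Let a and b be integers, each of which is either of the form 1 + 4γd for some integer γ with p ∤ (1 + 4γd), or of the form p² + 4γd for some integer γ with p ∤ γ. Then there exists an integer x with gcd(x, 2dp) = 1 such that 4dp² divides a − x²·b, if and only if a·b is a quadratic residue modulo p (i.e., there exists y with p ∣ ab − y²). -/
private lemma inv_of_coprime {a m : ℤ} (h : IsCoprime a m) : ∃ c t : ℤ, a * c - 1 = m * t := by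
  obtain ⟨u, v, huv⟩ := h
  exact ⟨u, -v, by linear_combination huv⟩

private lemma shape_facts (p : ℕ) (hp : p.Prime) (hodd : Odd p)
    (d : ℕ) (hpd : ¬ p ∣ d) (a : ℤ)
    (ha : (∃ γ : ℤ, a = 1 + 4 * γ * (d : ℤ) ∧ ¬ ((p : ℤ) ∣ (1 + 4 * γ * (d : ℤ)))) ∨
          (∃ γ : ℤ, a = (p : ℤ) ^ 2 + 4 * γ * (d : ℤ) ∧ ¬ ((p : ℤ) ∣ γ))) :
    ¬ (p : ℤ) ∣ a ∧ ∃ s t : ℤ, (s = 1 ∨ s = (p : ℤ)) ∧ a = s ^ 2 + 4 * (d : ℤ) * t := by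
  have hpZ : Prime ((p : ℤ)) := Nat.prime_iff_prime_int.mp hp
  have hp2 : p ≠ 2 := by rintro rfl; exact (Nat.not_odd_iff_even.mpr (by decide)) hodd
  have h4 : ¬ (p : ℤ) ∣ 4 := by
    intro h
    have : p ∣ 4 := by exact_mod_cast h
    have : p ∣ 2 := hp.dvd_of_dvd_pow (n := 2) (by norm_num [this])
    exact hp2 ((Nat.prime_dvd_prime_iff_eq hp Nat.prime_two).mp this)
  have hdZ : ¬ (p : ℤ) ∣ (d : ℤ) := fun h => hpd (by exact_mod_cast h)
  rcases ha with ⟨γ, rfl, hnd⟩ | ⟨γ, rfl, hγ⟩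
  · exact ⟨hnd, 1, γ, Or.inl rfl, by ring⟩
  · refine ⟨?_, (p : ℤ), γ, Or.inr rfl, by ring⟩
    intro h
    have h1 : (p : ℤ) ∣ 4 * γ * (d : ℤ) := by
      have := dvd_sub h (dvd_pow_self (p : ℤ) (n := 2) (by norm_num))
      simpa using this
    rcases hpZ.dvd_mul.mp h1 with h2 | h2
    · rcases hpZ.dvd_mul.mp h2 with h3 | h3
      · exact h4 h3
      · exact hγ h3
    · exact hdZ h2

/-- Let `p` be an odd prime and `d ≥ 1` with `p ∤ d`.  Let `a` and `b`
each be of the form `1 + 4γd` with `p ∤ (1 + 4γd)`, or of the form `p² + 4γd` with `p ∤ γ`.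
Then `a ≡ x² b (mod 4dp²)` is solvable with `gcd(x, 2dp) = 1` if and only if `ab` is a
quadratic residue modulo `p`. -/
theorem congruence_iff_QR_p_not_dvd_d (p : ℕ) (hp : p.Prime) (hodd : Odd p)
    (d : ℕ) (hd : 1 ≤ d) (hpd : ¬ p ∣ d) (a b : ℤ)
    (ha : (∃ γ : ℤ, a = 1 + 4 * γ * (d : ℤ) ∧ ¬ ((p : ℤ) ∣ (1 + 4 * γ * (d : ℤ)))) ∨
          (∃ γ : ℤ, a = (p : ℤ) ^ 2 + 4 * γ * (d : ℤ) ∧ ¬ ((p : ℤ) ∣ γ)))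
    (hb : (∃ γ : ℤ, b = 1 + 4 * γ * (d : ℤ) ∧ ¬ ((p : ℤ) ∣ (1 + 4 * γ * (d : ℤ)))) ∨
          (∃ γ : ℤ, b = (p : ℤ) ^ 2 + 4 * γ * (d : ℤ) ∧ ¬ ((p : ℤ) ∣ γ))) :
    (∃ x : ℤ, Int.gcd x (2 * (d : ℤ) * (p : ℤ)) = 1 ∧
        (4 * (d : ℤ) * (p : ℤ) ^ 2) ∣ (a - x ^ 2 * b)) ↔
      (∃ y : ℤ, (p : ℤ) ∣ (a * b - y ^ 2)) := by
  have hpZ : Prime ((p : ℤ)) := Nat.prime_iff_prime_int.mp hp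
  have hp2 : p ≠ 2 := by rintro rfl; exact (Nat.not_odd_iff_even.mpr (by decide)) hodd
  have h4 : ¬ (p : ℤ) ∣ 4 := by
    intro h
    have : p ∣ 4 := by exact_mod_cast h
    have : p ∣ 2 := hp.dvd_of_dvd_pow (n := 2) (by norm_num [this])
    exact hp2 ((Nat.prime_dvd_prime_iff_eq hp Nat.prime_two).mp this)
  have hdZ : ¬ (p : ℤ) ∣ (d : ℤ) := fun h => hpd (by exact_mod_cast h)
  have h2Z : ¬ (p : ℤ) ∣ 2 := by
    intro h
    exact hp2 ((Nat.prime_dvd_prime_iff_eq hp Nat.prime_two).mp (by exact_mod_cast h))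
  obtain ⟨hpa, sa, ta, hsa, hadef⟩ := shape_facts p hp hodd d hpd a ha
  obtain ⟨hpb, sb, tb, hsb, hbdef⟩ := shape_facts p hp hodd d hpd b hb
  have hp4d : ¬ (p : ℤ) ∣ 4 * (d : ℤ) := by
    intro h
    rcases hpZ.dvd_mul.mp h with h' | h'
    · exact h4 h'
    · exact hdZ h'
  have hcop_p_4d : IsCoprime ((p : ℤ)) (4 * (d : ℤ)) :=
    (hpZ.coprime_iff_not_dvd).mpr hp4d
  constructor
  · rintro ⟨x, hx, hdvd⟩
    refine ⟨x * b, ?_⟩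
    have hpdvd : (p : ℤ) ∣ a - x ^ 2 * b :=
      dvd_trans ⟨4 * (d : ℤ) * p, by ring⟩ hdvd
    obtain ⟨k, hk⟩ := hpdvd
    exact ⟨k * b, by linear_combination b * hk⟩
  · rintro ⟨y, hy⟩
    -- p does not divide y
    have hpy : ¬ (p : ℤ) ∣ y := by
      intro h
      have : (p : ℤ) ∣ a * b := by
        have := dvd_add hy (dvd_pow h (by norm_num) : (p : ℤ) ∣ y ^ 2)
        simpa using this
      rcases hpZ.dvd_mul.mp this with h' | h'
      · exact hpa h'
      · exact hpb h'
    obtain ⟨k, hk⟩ := hy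
    -- invert 2y mod p
    have hcop2y : IsCoprime (2 * y) ((p : ℤ)) := by
      refine ((hpZ.coprime_iff_not_dvd).mpr ?_).symm
      intro h
      rcases hpZ.dvd_mul.mp h with h' | h'
      · exact h2Z h'
      · exact hpy h'
    obtain ⟨w, m, hw⟩ := inv_of_coprime hcop2y
    -- Hensel lift: z with a*b ≡ z² mod p²
    set z : ℤ := y + w * k * (p : ℤ) with hzdef
    have hz : a * b - z ^ 2 = (p : ℤ) ^ 2 * (-(k * m) - w ^ 2 * k ^ 2) := by
      rw [hzdef]; linear_combination hk - k * (p : ℤ) * hw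
    have hpz : ¬ (p : ℤ) ∣ z := by
      intro h
      apply hpy
      have : (p : ℤ) ∣ z - w * k * (p : ℤ) := dvd_sub h ⟨w * k, by ring⟩
      simpa [hzdef] using this
    -- invert b mod p²
    have hcopb : IsCoprime b ((p : ℤ) ^ 2) :=
      (((hpZ.coprime_iff_not_dvd).mpr hpb).symm).pow_right
    obtain ⟨c, uc, hc⟩ := inv_of_coprime hcopb
    have hpc : ¬ (p : ℤ) ∣ c := by
      intro h
      have h1 : (p : ℤ) ∣ b * c := Dvd.dvd.mul_left h b
      have : (p : ℤ) ∣ 1 := by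
        have h2 : (p : ℤ) ∣ (p : ℤ) ^ 2 * uc := ⟨(p : ℤ) * uc, by ring⟩
        have := dvd_sub h1 h2
        rw [show b * c - (p : ℤ) ^ 2 * uc = 1 by linarith [hc]] at this
        exact this
      exact hpZ.not_dvd_one this
    set x₂ : ℤ := z * c with hx2def
    have hx2 : a - x₂ ^ 2 * b = (p : ℤ) ^ 2 * (-(a * uc * (b * c + 1)) + b * c ^ 2 * (-(k * m) - w ^ 2 * k ^ 2)) := by
      rw [hx2def]; linear_combination (-(a * (b * c + 1))) * hc + (b * c ^ 2) * hz
    -- inverses of sa, sb mod 4d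
    have hcopsa : IsCoprime sa (4 * (d : ℤ)) := by
      rcases hsa with rfl | rfl
      · exact isCoprime_one_left
      · exact hcop_p_4d
    have hcopsb : IsCoprime sb (4 * (d : ℤ)) := by
      rcases hsb with rfl | rfl
      · exact isCoprime_one_left
      · exact hcop_p_4d
    obtain ⟨ca, uca, hca⟩ := inv_of_coprime hcopsa
    obtain ⟨cb, ucb, hcb⟩ := inv_of_coprime hcopsb
    set x₁ : ℤ := sa * cb with hx1def
    have hx1 : a - x₁ ^ 2 * b = 4 * (d : ℤ) * (ta - sa ^ 2 * cb ^ 2 * tb - sa ^ 2 * ucb * (sb * cb + 1)) := by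
      rw [hx1def]
      linear_combination hadef - (sa * cb) ^ 2 * hbdef - (sa ^ 2 * (sb * cb + 1)) * hcb
    -- CRT
    have hcop4dp2 : IsCoprime (4 * (d : ℤ)) ((p : ℤ) ^ 2) := (hcop_p_4d.symm).pow_right
    obtain ⟨u, v, hbez⟩ := id hcop4dp2
    set x : ℤ := x₁ + 4 * (d : ℤ) * (u * (x₂ - x₁)) with hxdef
    have hd4 : x - x₁ = 4 * (d : ℤ) * (u * (x₂ - x₁)) := by rw [hxdef]; ring
    have hd5 : x - x₂ = (p : ℤ) ^ 2 * (v * (x₁ - x₂)) := by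
      rw [hxdef]; linear_combination (x₂ - x₁) * hbez
    refine ⟨x, ?_, ?_⟩
    · -- gcd condition
      have hxcop4d : IsCoprime x (4 * (d : ℤ)) := by
        refine ⟨ca * sb, -(uca + ucb + 4 * (d : ℤ) * uca * ucb + (u * (x₂ - x₁)) * (ca * sb)), ?_⟩
        have hxval : x = sa * cb + 4 * (d : ℤ) * (u * (x₂ - x₁)) := by rw [hxdef, hx1def]
        linear_combination (ca * sb) * hxval + (sb * cb) * hca + (1 + 4 * (d:ℤ) * uca) * hcb
      have hxp : IsCoprime x ((p : ℤ)) := by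
        refine ((hpZ.coprime_iff_not_dvd).mpr ?_).symm
        intro h
        have hpx2 : (p : ℤ) ∣ x₂ := by
          have h1 : (p : ℤ) ∣ x - x₂ := ⟨(p : ℤ) * (v * (x₁ - x₂)), by rw [hd5]; ring⟩
          have := dvd_sub h h1
          simpa using this
        rcases hpZ.dvd_mul.mp (hx2def ▸ hpx2) with h' | h'
        · exact hpz h'
        · exact hpc h'
      have hcopall : IsCoprime x (4 * (d : ℤ) * (p : ℤ)) := hxcop4d.mul_right hxp
      have hdvd2 : (2 * (d : ℤ) * (p : ℤ)) ∣ (4 * (d : ℤ) * (p : ℤ)) := ⟨2, by ring⟩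
      exact Int.isCoprime_iff_gcd_eq_one.mp (hcopall.of_isCoprime_of_dvd_right hdvd2)
    · -- divisibility
      have hdvd4d : (4 * (d : ℤ)) ∣ (a - x ^ 2 * b) := by
        have e1 : a - x ^ 2 * b = (a - x₁ ^ 2 * b) - (x - x₁) * (x + x₁) * b := by ring
        rw [e1]
        have hdx : (4 * (d : ℤ)) ∣ (x - x₁) := ⟨_, hd4⟩
        exact dvd_sub ⟨_, hx1⟩ ((hdx.mul_right (x + x₁)).mul_right b)
      have hdvdp2 : ((p : ℤ) ^ 2) ∣ (a - x ^ 2 * b) := by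
        have e1 : a - x ^ 2 * b = (a - x₂ ^ 2 * b) - (x - x₂) * (x + x₂) * b := by ring
        rw [e1]
        have hdx : ((p : ℤ) ^ 2) ∣ (x - x₂) := ⟨_, hd5⟩
        exact dvd_sub ⟨_, hx2⟩ ((hdx.mul_right (x + x₂)).mul_right b)
      have := hcop4dp2.mul_dvd hdvd4d hdvdp2
      have e2 : 4 * (d : ℤ) * (p : ℤ) ^ 2 = 4 * (d : ℤ) * (p : ℤ) ^ 2 := rfl
      simpa [mul_assoc] using this
end

section
/- Let p be an odd prime and d ≥ 1 an integer with p ∤ d. Let Q: 𝔽_p^{20} → 𝔽_p be the hyperbolic quadratic form Q(x) = x₁x₂ + x₃x₄ + ⋯ + x₁₉x₂₀. Then (p − 1)·#{λ ∈ 𝔽_p^{20} : 1 + 4dQ(λ) is a nonzero square in 𝔽_p} + #{λ ∈ 𝔽_p^{20} : Q(λ) ≠ 0 and d·Q(λ) is a square in 𝔽_p} = (p − 1)·(p^{10}(p^{10} + 1)/2). -/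
noncomputable def Qstd (p : ℕ) : (Fin 20 → ZMod p) → ZMod p := fun x => ∑ j : Fin 10,
  x ⟨2 * j.val, by have := j.isLt; omega⟩ * x ⟨2 * j.val + 1, by have := j.isLt; omega⟩

lemma lin_fiber (p : ℕ) [Fact p.Prime] (x : Fin 10 → ZMod p) (hx : x ≠ 0) (c : ZMod p) :
    Fintype.card {y : Fin 10 → ZMod p // ∑ j, x j * y j = c} = p ^ 9 := by
  set L : (Fin 10 → ZMod p) → ZMod p := fun y => ∑ j, x j * y j with hL
  obtain ⟨i, hi⟩ := Function.ne_iff.mp hx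
  have hi : x i ≠ 0 := hi
  have hy0 : ∀ e : ZMod p, L (Pi.single i ((x i)⁻¹ * e)) = e := by
    intro e
    show ∑ j, x j * (Pi.single i ((x i)⁻¹ * e) : Fin 10 → ZMod p) j = e
    rw [Finset.sum_eq_single i]
    · rw [Pi.single_eq_same, ← mul_assoc, mul_inv_cancel₀ hi, one_mul]
    · intro b _ hb; simp [Pi.single_eq_of_ne hb]
    · simp
  have Ladd : ∀ a b, L (a + b) = L a + L b := by
    intro a b; simp [hL, mul_add, Finset.sum_add_distrib]
  have Lsub : ∀ a b, L (a - b) = L a - L b := by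
    intro a b; simp [hL, mul_sub, Finset.sum_sub_distrib]
  have key : ∀ e : ZMod p, Fintype.card {y // L y = e} = Fintype.card {y // L y = 0} := by
    intro e
    refine Fintype.card_congr ⟨fun y => ⟨y.1 - Pi.single i ((x i)⁻¹ * e), ?_⟩,
      fun z => ⟨z.1 + Pi.single i ((x i)⁻¹ * e), ?_⟩, ?_, ?_⟩
    · rw [Lsub, y.2, hy0]; ring
    · rw [Ladd, z.2, hy0]; ring
    · intro y; ext1; simp
    · intro z; ext1; simp
  have part : p ^ 10 = ∑ e : ZMod p, Fintype.card {y // L y = e} := by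
    rw [← Fintype.card_sigma]
    rw [Fintype.card_congr (Equiv.sigmaFiberEquiv L)]
    simp [ZMod.card]
  have hp := (Fact.out : p.Prime)
  have : p ^ 10 = p * Fintype.card {y // L y = 0} := by
    rw [part]
    simp only [key]
    rw [Finset.sum_const, Finset.card_univ, ZMod.card, smul_eq_mul]
  have h9 : Fintype.card {y // L y = 0} = p ^ 9 := by
    have := this
    have hppos : 0 < p := hp.pos
    nlinarith [pow_succ p 9, this]
  exact (key c).trans h9

def pairEquiv (M : Type) : (Fin 20 → M) ≃ (Fin 10 → M) × (Fin 10 → M) where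
  toFun l := (fun j => l ⟨2 * j.val, by have := j.isLt; omega⟩,
              fun j => l ⟨2 * j.val + 1, by have := j.isLt; omega⟩)
  invFun v := fun i => if h : i.val % 2 = 0 then v.1 ⟨i.val / 2, by have := i.isLt; omega⟩
    else v.2 ⟨i.val / 2, by have := i.isLt; omega⟩
  left_inv l := by
    funext i
    dsimp only
    by_cases h : i.val % 2 = 0
    · rw [dif_pos h]
      exact congrArg l (Fin.ext (by simp only [Fin.val_mk]; have := i.isLt; omega))
    · rw [dif_neg h]
      exact congrArg l (Fin.ext (by simp only [Fin.val_mk]; have := i.isLt; omega))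
  right_inv v := by
    refine Prod.ext (funext fun j => ?_) (funext fun j => ?_) <;> dsimp only
    · have h : (2 * j.val) % 2 = 0 := by omega
      simp only [dif_pos h]
      exact congrArg v.1 (Fin.ext (by simp only [Fin.val_mk]; omega))
    · have h : ¬ ((2 * j.val + 1) % 2 = 0) := by omega
      simp only [dif_neg h]
      exact congrArg v.2 (Fin.ext (by simp only [Fin.val_mk]; omega))

lemma Qfiber (p : ℕ) [Fact p.Prime] (c : ZMod p) :
    Fintype.card {l : Fin 20 → ZMod p // ∑ j : Fin 10,
        l ⟨2 * j.val, by have := j.isLt; omega⟩ * l ⟨2 * j.val + 1, by have := j.isLt; omega⟩ = c}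
      = (p ^ 10 - 1) * p ^ 9 + if c = 0 then p ^ 10 else 0 := by
  classical
  have e1 : {l : Fin 20 → ZMod p // ∑ j : Fin 10,
        l ⟨2 * j.val, by have := j.isLt; omega⟩ * l ⟨2 * j.val + 1, by have := j.isLt; omega⟩ = c}
      ≃ {v : (Fin 10 → ZMod p) × (Fin 10 → ZMod p) // ∑ j, v.1 j * v.2 j = c} :=
    (pairEquiv (ZMod p)).subtypeEquiv (fun l => Iff.rfl)
  have e2 := Equiv.subtypeProdEquivSigmaSubtype
    (fun (a b : Fin 10 → ZMod p) => ∑ j, a j * b j = c)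
  rw [Fintype.card_congr (e1.trans e2), Fintype.card_sigma]
  rw [Finset.sum_eq_sum_sdiff_singleton_add (Finset.mem_univ (0 : Fin 10 → ZMod p))]
  have h0 : Fintype.card {b : Fin 10 → ZMod p // ∑ j, (0 : Fin 10 → ZMod p) j * b j = c}
      = if c = 0 then p ^ 10 else 0 := by
    split_ifs with hc
    · subst hc
      simp only [Pi.zero_apply, zero_mul, Finset.sum_const_zero]
      rw [Fintype.card_subtype]
      simp [ZMod.card, Finset.card_univ]
    · rw [Fintype.card_eq_zero_iff]
      refine ⟨fun b => hc ?_⟩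
      have := b.2
      simpa using this.symm
  rw [h0]
  congr 1
  rw [Finset.sum_congr rfl (fun a ha => lin_fiber p a (by
    simp only [Finset.mem_sdiff, Finset.mem_singleton] at ha; exact ha.2) c)]
  rw [Finset.sum_const, smul_eq_mul]
  congr 1
  rw [Finset.card_sdiff_of_subset (by simp), Finset.card_univ, Finset.card_singleton]
  simp [ZMod.card]

lemma Qcount (p : ℕ) [Fact p.Prime] (P : ZMod p → Prop) [DecidablePred P] :
    Fintype.card {l : Fin 20 → ZMod p // P (Qstd p l)}
      = (Finset.univ.filter P).card * ((p ^ 10 - 1) * p ^ 9)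
        + if P 0 then p ^ 10 else 0 := by
  classical
  set f : (Fin 20 → ZMod p) → ZMod p := Qstd p with hf
  rw [Fintype.card_subtype]
  rw [Finset.card_eq_sum_card_fiberwise (f := f) (t := Finset.univ.filter P)
    (fun x hx => by simp only [Finset.mem_coe, Finset.mem_filter, Finset.mem_univ, true_and] at hx ⊢; exact hx)]
  have hinner : ∀ b ∈ Finset.univ.filter P,
      (Finset.filter (fun l => f l = b) (Finset.univ.filter (fun l => P (f l)))).card
        = (p ^ 10 - 1) * p ^ 9 + if b = 0 then p ^ 10 else 0 := by
    intro b hb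
    have hPb : P b := by simpa using hb
    have : Finset.filter (fun l => f l = b) (Finset.univ.filter (fun l => P (f l)))
        = Finset.univ.filter (fun l => f l = b) := by
      ext l
      simp only [Finset.mem_filter, Finset.mem_univ, true_and]
      constructor
      · tauto
      · intro h; exact ⟨h ▸ hPb, h⟩
    rw [this, ← Fintype.card_subtype]
    exact Qfiber p b
  rw [Finset.sum_congr rfl hinner, Finset.sum_add_distrib, Finset.sum_const, smul_eq_mul,
    Finset.sum_ite_eq' (Finset.univ.filter P) 0 (fun _ => p ^ 10)]
  simp [Finset.mem_filter]

lemma NS_card (p : ℕ) [Fact p.Prime] (hodd : Odd p) :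
    2 * (Finset.univ.filter (fun s : ZMod p => ∃ t : ZMod p, t ≠ 0 ∧ s = t ^ 2)).card
      = p - 1 := by
  classical
  haveI : NeZero p := ⟨(Fact.out : p.Prime).ne_zero⟩
  have h2 : (2 : ZMod p) ≠ 0 := by
    intro h
    rw [show (2 : ZMod p) = ((2 : ℕ) : ZMod p) by norm_cast] at h
    have hdvd := (ZMod.natCast_eq_zero_iff 2 p).mp h
    have hle := Nat.le_of_dvd (by norm_num) hdvd
    have h1 := (Fact.out : p.Prime).one_lt
    rcases hodd with ⟨k, hk⟩
    omega
  have hne : ∀ a : ZMod p, a ≠ 0 → a ≠ -a := by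
    intro a ha h
    apply ha
    have : (2 : ZMod p) * a = 0 := by linear_combination h
    rcases mul_eq_zero.mp this with h' | h'
    · exact absurd h' h2
    · exact h'
  have hcount : (Finset.univ.erase (0 : ZMod p)).card
      = ∑ s ∈ Finset.univ.filter (fun s : ZMod p => ∃ t : ZMod p, t ≠ 0 ∧ s = t ^ 2),
          (Finset.filter (fun t => t ^ 2 = s) (Finset.univ.erase 0)).card := by
    apply Finset.card_eq_sum_card_fiberwise (f := fun t => t ^ 2)
    intro t ht
    simp only [Finset.mem_coe, Finset.mem_erase, Finset.mem_univ, and_true] at ht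
    simp only [Finset.mem_coe, Finset.mem_filter, Finset.mem_univ, true_and]
    exact ⟨t, ht, rfl⟩
  have hfiber : ∀ s ∈ Finset.univ.filter (fun s : ZMod p => ∃ t : ZMod p, t ≠ 0 ∧ s = t ^ 2),
      (Finset.filter (fun t => t ^ 2 = s) (Finset.univ.erase 0)).card = 2 := by
    intro s hs
    simp only [Finset.mem_filter, Finset.mem_univ, true_and] at hs
    obtain ⟨a, ha, rfl⟩ := hs
    have : Finset.filter (fun t => t ^ 2 = a ^ 2) (Finset.univ.erase 0) = {a, -a} := by
      ext t
      simp only [Finset.mem_filter, Finset.mem_erase, Finset.mem_univ, and_true, true_and,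
        Finset.mem_insert, Finset.mem_singleton]
      constructor
      · rintro ⟨-, h⟩
        exact sq_eq_sq_iff_eq_or_eq_neg.mp h
      · rintro (rfl | rfl)
        · exact ⟨ha, rfl⟩
        · exact ⟨neg_ne_zero.mpr ha, by rw [neg_sq]⟩
    rw [this, Finset.card_insert_of_notMem (by simpa using hne a ha), Finset.card_singleton]
  have h1 : (Finset.univ.erase (0 : ZMod p)).card
      = (Finset.univ.filter (fun s : ZMod p => ∃ t : ZMod p, t ≠ 0 ∧ s = t ^ 2)).card * 2 := by
    rw [hcount, Finset.sum_congr rfl hfiber, Finset.sum_const, smul_eq_mul]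
  have h2' : (Finset.univ.erase (0 : ZMod p)).card = p - 1 := by
    rw [Finset.card_erase_of_mem (Finset.mem_univ 0), Finset.card_univ, ZMod.card]
  omega

lemma filter_card_one (p : ℕ) [Fact p.Prime] (hodd : Odd p) (d : ℕ) (hpd : ¬ p ∣ d) :
    (Finset.univ.filter (fun c : ZMod p => ∃ t : ZMod p, t ≠ 0 ∧ 1 + 4 * (d : ZMod p) * c = t ^ 2)).card
      = (Finset.univ.filter (fun s : ZMod p => ∃ t : ZMod p, t ≠ 0 ∧ s = t ^ 2)).card := by
  haveI : NeZero p := ⟨(Fact.out : p.Prime).ne_zero⟩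
  have h2 : (2 : ZMod p) ≠ 0 := by
    intro h
    rw [show (2 : ZMod p) = ((2 : ℕ) : ZMod p) by norm_cast] at h
    have hdvd := (ZMod.natCast_eq_zero_iff 2 p).mp h
    have hle := Nat.le_of_dvd (by norm_num) hdvd
    have h1 := (Fact.out : p.Prime).one_lt
    rcases hodd with ⟨k, hk⟩
    omega
  have hd : (d : ZMod p) ≠ 0 := by
    intro h
    exact hpd ((ZMod.natCast_eq_zero_iff d p).mp h)
  have h4d : (4 : ZMod p) * (d : ZMod p) ≠ 0 := by
    have h4 : (4 : ZMod p) ≠ 0 := by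
      have : (4 : ZMod p) = 2 * 2 := by norm_num
      rw [this]; exact mul_ne_zero h2 h2
    exact mul_ne_zero h4 hd
  apply Finset.card_bij (fun c _ => 1 + 4 * (d : ZMod p) * c)
  · intro c hc
    simp only [Finset.mem_filter, Finset.mem_univ, true_and] at hc ⊢
    obtain ⟨t, ht, h⟩ := hc
    exact ⟨t, ht, h.symm ▸ rfl⟩
  · intro c₁ _ c₂ _ h
    have : (4 : ZMod p) * d * c₁ = 4 * d * c₂ := by linear_combination h
    exact mul_left_cancel₀ h4d this
  · intro s hs
    simp only [Finset.mem_filter, Finset.mem_univ, true_and] at hs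
    obtain ⟨t, ht, rfl⟩ := hs
    refine ⟨(t ^ 2 - 1) * ((4 : ZMod p) * d)⁻¹, ?_, ?_⟩
    · simp only [Finset.mem_filter, Finset.mem_univ, true_and]
      exact ⟨t, ht, by linear_combination (t ^ 2 - 1) * mul_inv_cancel₀ h4d⟩
    · linear_combination (t ^ 2 - 1) * mul_inv_cancel₀ h4d

lemma filter_card_two (p : ℕ) [Fact p.Prime] (d : ℕ) (hpd : ¬ p ∣ d) :
    (Finset.univ.filter (fun c : ZMod p => c ≠ 0 ∧ ∃ t : ZMod p, (d : ZMod p) * c = t ^ 2)).card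
      = (Finset.univ.filter (fun s : ZMod p => ∃ t : ZMod p, t ≠ 0 ∧ s = t ^ 2)).card := by
  haveI : NeZero p := ⟨(Fact.out : p.Prime).ne_zero⟩
  have hd : (d : ZMod p) ≠ 0 := by
    intro h
    exact hpd ((ZMod.natCast_eq_zero_iff d p).mp h)
  apply Finset.card_bij (fun c _ => (d : ZMod p) * c)
  · intro c hc
    simp only [Finset.mem_filter, Finset.mem_univ, true_and] at hc ⊢
    obtain ⟨hc0, t, ht⟩ := hc
    refine ⟨t, fun h0 => ?_, ht⟩
    have hz : (d : ZMod p) * c = 0 := by rw [ht, h0]; ring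
    rcases mul_eq_zero.mp hz with h | h
    · exact hd h
    · exact hc0 h
  · intro c₁ _ c₂ _ h
    exact mul_left_cancel₀ hd h
  · intro s hs
    simp only [Finset.mem_filter, Finset.mem_univ, true_and] at hs
    obtain ⟨t, ht, rfl⟩ := hs
    refine ⟨t ^ 2 * (d : ZMod p)⁻¹, ?_, by field_simp⟩
    simp only [Finset.mem_filter, Finset.mem_univ, true_and]
    refine ⟨?_, t, by field_simp⟩
    intro h
    rcases mul_eq_zero.mp h with h' | h'
    · exact ht (pow_eq_zero_iff (by norm_num) |>.mp h')
    · exact (inv_ne_zero hd) h'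

lemma QcountNat (p : ℕ) [Fact p.Prime] (P : ZMod p → Prop) [DecidablePred P] :
    Nat.card {l : Fin 20 → ZMod p // P (Qstd p l)}
      = (Finset.univ.filter P).card * ((p ^ 10 - 1) * p ^ 9)
        + if P 0 then p ^ 10 else 0 := by
  rw [Nat.card_eq_fintype_card]
  exact Qcount p P

/-- Let `p` be an odd prime and `d ≥ 1` with `p ∤ d`, and let `Q` be the
hyperbolic quadratic form on `𝔽_p^{20}`.  Then
`(p−1)·#{λ : 1 + 4dQ(λ) a nonzero square} + #{λ : Q(λ) ≠ 0 and dQ(λ) a square}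
  = (p−1)·(p¹⁰(p¹⁰+1)/2)`. -/
theorem count_square_class_lattices (p : ℕ) (hp : p.Prime) (hodd : Odd p)
    (d : ℕ) (hd : 1 ≤ d) (hpd : ¬ p ∣ d)
    (Q : (Fin 20 → ZMod p) → ZMod p)
    (hQ : ∀ x, Q x = ∑ j : Fin 10,
      x ⟨2 * j.val, by have := j.isLt; omega⟩ * x ⟨2 * j.val + 1, by have := j.isLt; omega⟩) :
    (p - 1) * Nat.card {l : Fin 20 → ZMod p //
        ∃ t : ZMod p, t ≠ 0 ∧ 1 + 4 * (d : ZMod p) * Q l = t ^ 2}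
      + Nat.card {l : Fin 20 → ZMod p //
          Q l ≠ 0 ∧ ∃ t : ZMod p, (d : ZMod p) * Q l = t ^ 2}
      = (p - 1) * (p ^ 10 * (p ^ 10 + 1) / 2) := by
  haveI : Fact p.Prime := ⟨hp⟩
  have hQ' : Q = Qstd p := funext hQ
  subst hQ'
  have hA : Nat.card {l : Fin 20 → ZMod p //
      ∃ t : ZMod p, t ≠ 0 ∧ 1 + 4 * (d : ZMod p) * Qstd p l = t ^ 2}
      = (Finset.univ.filter (fun c : ZMod p => ∃ t : ZMod p, t ≠ 0 ∧ 1 + 4 * (d : ZMod p) * c = t ^ 2)).card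
          * ((p ^ 10 - 1) * p ^ 9)
        + if (∃ t : ZMod p, t ≠ 0 ∧ 1 + 4 * (d : ZMod p) * 0 = t ^ 2) then p ^ 10 else 0 :=
    QcountNat p (fun c => ∃ t : ZMod p, t ≠ 0 ∧ 1 + 4 * (d : ZMod p) * c = t ^ 2)
  have hB : Nat.card {l : Fin 20 → ZMod p //
      Qstd p l ≠ 0 ∧ ∃ t : ZMod p, (d : ZMod p) * Qstd p l = t ^ 2}
      = (Finset.univ.filter (fun c : ZMod p => c ≠ 0 ∧ ∃ t : ZMod p, (d : ZMod p) * c = t ^ 2)).card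
          * ((p ^ 10 - 1) * p ^ 9)
        + if ((0 : ZMod p) ≠ 0 ∧ ∃ t : ZMod p, (d : ZMod p) * 0 = t ^ 2) then p ^ 10 else 0 :=
    QcountNat p (fun c => c ≠ 0 ∧ ∃ t : ZMod p, (d : ZMod p) * c = t ^ 2)
  rw [hA, hB, filter_card_one p hodd d hpd, filter_card_two p d hpd,
    if_pos ⟨1, one_ne_zero, by ring⟩, if_neg (fun h => h.1 rfl)]
  set k := (Finset.univ.filter (fun s : ZMod p => ∃ t : ZMod p, t ≠ 0 ∧ s = t ^ 2)).card with hkdef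
  have hk : 2 * k = p - 1 := NS_card p hodd
  -- arithmetic
  have hm : 1 ≤ p ^ 10 := Nat.one_le_pow _ _ hp.pos
  obtain ⟨n, hn⟩ : ∃ n, p ^ 10 = n + 1 := ⟨p ^ 10 - 1, by omega⟩
  have hp9 : (p - 1 + 1) * p ^ 9 = n + 1 := by
    rw [Nat.sub_add_cancel hp.one_le, ← hn, ← pow_succ']
  rw [hn]
  simp only [Nat.add_sub_cancel]
  set q := p - 1 with hqdef
  have hinner : (q + 1) * (n * p ^ 9) = n * (n + 1) := by
    calc (q + 1) * (n * p ^ 9) = n * ((q + 1) * p ^ 9) := by ring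
    _ = n * (n + 1) := by rw [hp9]
  have hdvd : 2 ∣ (n + 1) * (n + 1 + 1) := (Nat.even_mul_succ_self (n + 1)).two_dvd
  have hRHS : 2 * (q * ((n + 1) * (n + 1 + 1) / 2)) = q * ((n + 1) * (n + 1 + 1)) := by
    rw [show 2 * (q * ((n + 1) * (n + 1 + 1) / 2)) = q * (2 * ((n + 1) * (n + 1 + 1) / 2)) by ring,
      Nat.mul_div_cancel' hdvd]
  have hLHS : 2 * (q * (k * (n * p ^ 9) + (n + 1)) + k * (n * p ^ 9))
      = q * ((q + 1) * (n * p ^ 9) + 2 * (n + 1)) := by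
    rw [← hk]; ring
  have key : 2 * (q * (k * (n * p ^ 9) + (n + 1)) + k * (n * p ^ 9))
      = 2 * (q * ((n + 1) * (n + 1 + 1) / 2)) := by
    rw [hLHS, hRHS, hinner]; ring
  omega
end

section
/- Let p > 3 be a prime and let c be an integer with p ∤ c. Then there exists an integer x with gcd(x, 2p) = 1 such that 4p² divides (4p² − 1)/3 − (p² + 4c)·x², if and only if −3c is a quadratic residue modulo p (i.e., there exists y with p ∣ 3c + y²). -/
/-- Let `p > 3` be a prime and `c` an integer with `p ∤ c`.  Then
`(4p² − 1)/3 ≡ (p² + 4c) x² (mod 4p²)` is solvable with `gcd(x, 2p) = 1` if and only if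
`−3c` is a quadratic residue modulo `p`. -/
theorem cubic_fourfold_congruence (p : ℕ) (hp : p.Prime) (hp3 : 3 < p)
    (c : ℤ) (hc : ¬ ((p : ℤ) ∣ c)) :
    (∃ x : ℤ, Int.gcd x (2 * (p : ℤ)) = 1 ∧
        (4 * (p : ℤ) ^ 2) ∣ ((4 * (p : ℤ) ^ 2 - 1) / 3 - ((p : ℤ) ^ 2 + 4 * c) * x ^ 2)) ↔
      (∃ y : ℤ, (p : ℤ) ∣ (3 * c + y ^ 2)) := by
  -- nat-level facts
  have hpodd : Odd p := hp.odd_of_ne_two (by omega)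
  have hp3' : ¬ (3 ∣ p) := by
    intro h
    rcases hp.eq_one_or_self_of_dvd 3 h with h1 | h1 <;> omega
  have hp12 : ¬ (p ∣ 12) := by
    intro h
    have := Nat.le_of_dvd (by norm_num) h
    interval_cases p <;> first | omega | exact absurd hp (by decide)
  -- integer-level facts
  set P : ℤ := (p : ℤ) with hPdef
  have hPprime : Prime P := Nat.prime_iff_prime_int.mp hp
  have hP3 : (3:ℤ) < P := by rw [hPdef]; exact_mod_cast hp3
  have hPodd : Odd P := by rw [hPdef]; exact_mod_cast hpodd
  have hP3dvd : ¬ P ∣ 3 := fun h => by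
    have := Int.le_of_dvd (by norm_num) h; omega
  have hP12 : ¬ P ∣ 12 := by rw [hPdef]; exact_mod_cast hp12
  have h3P : ¬ (3:ℤ) ∣ P := by rw [hPdef]; exact_mod_cast hp3'
  -- 3 divides 4P² - 1
  have h3dvd : (3:ℤ) ∣ 4*P^2 - 1 := by
    have hmod : P % 3 = 1 ∨ P % 3 = 2 := by omega
    obtain ⟨q, hq⟩ : ∃ q, P = 3*q + P % 3 := ⟨P/3, by omega⟩
    rcases hmod with h1 | h1 <;> rw [h1] at hq
    · exact ⟨12*q^2+8*q+1, by rw [hq]; ring⟩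
    · exact ⟨12*q^2+16*q+5, by rw [hq]; ring⟩
  have hN : 3 * ((4*P^2 - 1)/3) = 4*P^2 - 1 := Int.mul_ediv_cancel' h3dvd
  set N : ℤ := (4*P^2 - 1)/3 with hNdef
  constructor
  · rintro ⟨x, hgcd, m, hm⟩
    refine ⟨6*c*x, ?_⟩
    have key : P ∣ 1 + 12*c*x^2 :=
      ⟨P * (4 - 3*x^2 - 12*m), by linear_combination hN - 3*hm⟩
    have h2 := key.mul_left (3*c)
    have e : 3*c + (6*c*x)^2 = 3*c*(1 + 12*c*x^2) := by ring
    rw [e]; exact h2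
  · rintro ⟨y, k, hk⟩
    -- p does not divide y
    have hyP : ¬ P ∣ y := by
      intro h
      obtain ⟨s, hs⟩ := h
      have h3c : P ∣ 3*c := ⟨k - P*s^2, by linear_combination hk - (y + P*s)*hs⟩
      rcases hPprime.dvd_mul.mp h3c with h' | h'
      · exact hP3dvd h'
      · exact hc h'
    obtain ⟨u, v, huv⟩ := (hPprime.coprime_iff_not_dvd.mpr hyP).symm
    -- Hensel lift: z² ≡ -12c (mod P²)
    set z : ℤ := 2*y - k*u*P with hzdef
    have hz : z^2 + 12*c = P^2 * (4*k*v + k^2*u^2) := by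
      rw [hzdef]; linear_combination 4*hk - 4*P*k*huv
    -- p doesn't divide 12c
    have h12c : ¬ P ∣ 12*c := by
      intro h
      rcases hPprime.dvd_mul.mp h with h' | h'
      · exact hP12 h'
      · exact hc h'
    -- inverse of 12c mod P²
    obtain ⟨w, w', hw⟩ :=
      ((hPprime.coprime_iff_not_dvd.mpr h12c).symm).pow_right (n := 2)
    -- x' := z*w satisfies 12c x'² ≡ -1 mod P²
    have hx' : P^2 ∣ 12*c*(z*w)^2 + 1 := by
      refine ⟨12*c*w^2*(4*k*v + k^2*u^2) + 2*w' - w'^2*P^2, ?_⟩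
      linear_combination 12*c*w^2*hz - (1 - w'*P^2 + 12*c*w)*hw
    -- adjust parity
    have hmain : ∃ x : ℤ, Odd x ∧ P^2 ∣ 12*c*x^2 + 1 := by
      rcases Int.even_or_odd (z*w) with he | ho
      · refine ⟨z*w + P^2, he.add_odd (hPodd.pow), ?_⟩
        obtain ⟨a, ha⟩ := hx'
        exact ⟨a + 12*c*(2*(z*w) + P^2), by linear_combination ha⟩
      · exact ⟨z*w, ho, hx'⟩
    obtain ⟨x, hxodd, a, ha⟩ := hmain
    have hPx : ¬ P ∣ x := by
      intro h
      obtain ⟨s, hs⟩ := h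
      have h1 : P ∣ 1 := ⟨P*a - 12*c*P*s^2, by rw [hs] at ha; linear_combination ha⟩
      have := Int.le_of_dvd (by norm_num) h1; omega
    obtain ⟨b, hb⟩ := hxodd
    have h2x : ¬ (2:ℤ) ∣ x := by omega
    obtain ⟨d, hd⟩ := hPodd
    refine ⟨x, ?_, ?_⟩
    · refine Int.isCoprime_iff_gcd_eq_one.mp ?_
      have c2 : IsCoprime x 2 := (Int.prime_two.coprime_iff_not_dvd.mpr h2x).symm
      have cP : IsCoprime x P := (hPprime.coprime_iff_not_dvd.mpr hPx).symm
      exact c2.mul_right cP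
    · -- main divisibility
      have hP2M : P^2 ∣ N - (P^2 + 4*c)*x^2 := by
        have hcop : IsCoprime (P^2) 3 :=
          (hPprime.coprime_iff_not_dvd.mpr hP3dvd).pow_left
        exact hcop.dvd_of_dvd_mul_left ⟨4 - 3*x^2 - a, by linear_combination hN - ha⟩
      have h4M : (4:ℤ) ∣ N - (P^2 + 4*c)*x^2 := by
        have h43 : (4:ℤ) ∣ 3 * (N - (P^2 + 4*c)*x^2) := by
          refine ⟨d^2 + d - 3*P^2*(b^2+b) - 3*c*x^2, ?_⟩
          linear_combination hN + (-3*P^2*(x+2*b+1))*hb + (P+2*d+1)*hd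
        have hcop : IsCoprime (4:ℤ) 3 :=
          Int.isCoprime_iff_gcd_eq_one.mpr (by norm_num)
        exact hcop.dvd_of_dvd_mul_left h43
      have hcop4P : IsCoprime (4:ℤ) (P^2) := by
        have h2P : ¬ (2:ℤ) ∣ P := by omega
        have h2c : IsCoprime (2:ℤ) P := Int.prime_two.coprime_iff_not_dvd.mpr h2P
        have := h2c.pow (m := 2) (n := 2)
        norm_num at this
        exact this
      exact hcop4P.mul_dvd h4M hP2M
end

section
/- Let d ≥ 1 be an integer. There exists an integer x with gcd(x, 2d) = 1 such that 4d divides x² + 3, if and only if d is odd and every prime divisor q of d satisfies q ≡ 1 (mod 3). -/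
/-- If `q ≡ 1 (mod 3)` is prime, then `-3` is a square mod `q`. -/
private lemma aux_sq_neg_three {q : ℕ} (hq : q.Prime) (h3 : q % 3 = 1) :
    ∃ y : ℤ, (q : ℤ) ∣ y ^ 2 + 3 := by
  haveI : Fact q.Prime := ⟨hq⟩
  have hq2 : 2 ≤ q := hq.two_le
  have h3d : 3 ∣ q - 1 := by omega
  have hcard : Fintype.card (ZMod q)ˣ = q - 1 := by
    rw [ZMod.card_units_eq_totient, Nat.totient_prime hq]
  haveI : Fact (Nat.Prime 3) := ⟨by norm_num⟩
  obtain ⟨u, hu⟩ := exists_prime_orderOf_dvd_card (G := (ZMod q)ˣ) 3 (hcard ▸ h3d)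
  set ω : ZMod q := (u : ZMod q) with hω
  have hω3 : ω ^ 3 = 1 := by
    have h : u ^ 3 = 1 := by rw [← hu]; exact pow_orderOf_eq_one u
    have := congrArg (Units.val) h
    push_cast at this
    exact this
  have hω1 : ω ≠ 1 := by
    intro h
    have : u = 1 := Units.ext h
    rw [this, orderOf_one] at hu
    norm_num at hu
  have hfac : (ω - 1) * (ω ^ 2 + ω + 1) = 0 := by linear_combination hω3
  have hsum : ω ^ 2 + ω + 1 = 0 := by
    rcases mul_eq_zero.mp hfac with h | h
    · exact absurd (sub_eq_zero.mp h) hω1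
    · exact h
  have hsq : (2 * ω + 1) ^ 2 = -3 := by linear_combination 4 * hsum
  obtain ⟨y, hy⟩ := ZMod.intCast_surjective (2 * ω + 1)
  refine ⟨y, (ZMod.intCast_zmod_eq_zero_iff_dvd _ q).mp ?_⟩
  push_cast
  rw [hy]
  linear_combination hsq

/-- If an odd prime `q` divides `y² + 3` with `q ∤ y`, then `q ≡ 1 (mod 3)`. -/
private lemma aux_mod_three {q : ℕ} (hq : q.Prime) (hq2 : q ≠ 2) {y : ℤ}
    (hdvd : (q : ℤ) ∣ y ^ 2 + 3) (hy : ¬ (q : ℤ) ∣ y) : q % 3 = 1 := by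
  haveI : Fact q.Prime := ⟨hq⟩
  have hq3 : q ≠ 3 := by
    rintro rfl
    have h1 : (3 : ℤ) ∣ y ^ 2 := by
      obtain ⟨c, hc⟩ := hdvd
      push_cast at hc
      exact ⟨c - 1, by linarith⟩
    exact hy (Int.prime_three.dvd_of_dvd_pow h1)
  set a : ZMod q := ((y : ℤ) : ZMod q) with ha
  have ha0 : a ≠ 0 := fun h => hy ((ZMod.intCast_zmod_eq_zero_iff_dvd _ q).mp h)
  have hsq : a ^ 2 = -3 := by
    have h0 : ((y ^ 2 + 3 : ℤ) : ZMod q) = 0 :=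
      (ZMod.intCast_zmod_eq_zero_iff_dvd _ q).mpr hdvd
    push_cast at h0
    linear_combination h0
  have h2 : (2 : ZMod q) ≠ 0 := by
    intro h
    have : ((2 : ℕ) : ZMod q) = 0 := by exact_mod_cast h
    have := (ZMod.natCast_eq_zero_iff 2 q).mp this
    exact hq2 ((Nat.prime_dvd_prime_iff_eq hq (by norm_num)).mp this)
  set c : ZMod q := (2 : ZMod q)⁻¹ with hcdef
  have hc : 2 * c = 1 := mul_inv_cancel₀ h2
  set ω : ZMod q := (a - 1) * c with hωdef
  have hsum : ω ^ 2 + ω + 1 = 0 := by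
    rw [hωdef]
    linear_combination c ^ 2 * hsq + (-(a + 1) * c - 1) * hc
  have hω3 : ω ^ 3 = 1 := by linear_combination (ω - 1) * hsum
  have hω1 : ω ≠ 1 := by
    intro h
    rw [h] at hsum
    have h30 : ((3 : ℕ) : ZMod q) = 0 := by push_cast; linear_combination hsum
    have := (ZMod.natCast_eq_zero_iff 3 q).mp h30
    exact hq3 ((Nat.prime_dvd_prime_iff_eq hq (by norm_num)).mp this)
  have hω0 : ω ≠ 0 := by
    intro h
    rw [h] at hsum
    simp at hsum
  haveI : Fact (Nat.Prime 3) := ⟨by norm_num⟩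
  have horder : orderOf ω = 3 := orderOf_eq_prime hω3 hω1
  have hfl : ω ^ (q - 1) = 1 := ZMod.pow_card_sub_one_eq_one hω0
  have h3d : 3 ∣ q - 1 := horder ▸ orderOf_dvd_of_pow_eq_one hfl
  have := hq.two_le
  omega

/-- Existence: if every prime factor of `d ≥ 1` is `≡ 1 (mod 3)`, then `x² ≡ -3 (mod 4d)`
is solvable. -/
private lemma aux_exists_sol : ∀ d : ℕ, 1 ≤ d → (∀ q : ℕ, q.Prime → q ∣ d → q % 3 = 1) →
    ∃ x : ℤ, (4 * (d : ℤ)) ∣ x ^ 2 + 3 := by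
  intro d
  induction d using Nat.strong_induction_on with
  | _ d ih =>
    intro hd hq
    rcases eq_or_lt_of_le hd with h1 | h1
    · exact ⟨1, by rw [← h1]; norm_num⟩
    · have hd1 : d ≠ 1 := by omega
      set p := d.minFac with hpdef
      have hpp : p.Prime := Nat.minFac_prime hd1
      have hpd : p ∣ d := Nat.minFac_dvd d
      have hp3 : p % 3 = 1 := hq p hpp hpd
      have hp2le : 2 ≤ p := hpp.two_le
      have hp2 : p ≠ 2 := by omega
      have hp3' : p ≠ 3 := by omega
      obtain ⟨e, he⟩ := hpd
      have he1 : 1 ≤ e := by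
        rcases Nat.eq_zero_or_pos e with h | h
        · rw [h, mul_zero] at he; omega
        · exact h
      have helt : e < d := by nlinarith
      have hqe : ∀ r : ℕ, r.Prime → r ∣ e → r % 3 = 1 := fun r hr hre =>
        hq r hr (hre.trans ⟨p, by rw [he]; ring⟩)
      obtain ⟨x, hx⟩ := ih e helt he1 hqe
      haveI : Fact p.Prime := ⟨hpp⟩
      by_cases hpe : p ∣ e
      · -- Hensel lifting
        have hpe' : (p : ℤ) ∣ (e : ℤ) := Int.natCast_dvd_natCast.mpr hpe
        have hp4e : (p : ℤ) ∣ 4 * (e : ℤ) := hpe'.mul_left 4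
        have hpx2 : (p : ℤ) ∣ x ^ 2 + 3 := hp4e.trans hx
        have hpx : ¬ (p : ℤ) ∣ x := by
          intro h
          have h3' : (p : ℤ) ∣ 3 := by
            obtain ⟨c, hc⟩ := hpx2
            obtain ⟨k, hk⟩ := h
            exact ⟨c - p * k ^ 2, by rw [hk] at hc; linarith [hc]⟩
          have : p ∣ 3 := by exact_mod_cast h3'
          exact hp3' ((Nat.prime_dvd_prime_iff_eq hpp (by norm_num)).mp this)
        obtain ⟨k, hk⟩ := hx
        set a : ZMod p := ((x : ℤ) : ZMod p) with hadef
        have ha0 : a ≠ 0 := fun h => hpx ((ZMod.intCast_zmod_eq_zero_iff_dvd _ p).mp h)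
        have h2 : (2 : ZMod p) ≠ 0 := by
          intro h
          have : ((2 : ℕ) : ZMod p) = 0 := by exact_mod_cast h
          have := (ZMod.natCast_eq_zero_iff 2 p).mp this
          exact hp2 ((Nat.prime_dvd_prime_iff_eq hpp (by norm_num)).mp this)
        have h2a : 2 * a ≠ 0 := mul_ne_zero h2 ha0
        obtain ⟨t, ht⟩ := ZMod.intCast_surjective (-(((k : ℤ) : ZMod p)) * (2 * a)⁻¹)
        have key : (p : ℤ) ∣ k + 2 * x * t := by
          apply (ZMod.intCast_zmod_eq_zero_iff_dvd _ p).mp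
          push_cast
          rw [ht, ← hadef]
          have hinv : (2 * a) * (2 * a)⁻¹ = 1 := mul_inv_cancel₀ h2a
          linear_combination (-(((k : ℤ) : ZMod p))) * hinv
        refine ⟨x + t * (4 * e), ?_⟩
        have hd4 : (4 * (d : ℤ)) = (4 * (e : ℤ)) * p := by rw [he]; push_cast; ring
        rw [hd4]
        have hexpand : (x + t * (4 * e)) ^ 2 + 3
            = (4 * (e : ℤ)) * (k + 2 * x * t + 4 * e * t ^ 2) := by
          linear_combination hk
        rw [hexpand]
        exact mul_dvd_mul_left _ (dvd_add key ((hpe'.mul_left 4).mul_right (t ^ 2)))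
      · -- CRT with a new prime
        have hcop : Nat.Coprime (4 * e) p := by
          rw [Nat.coprime_comm]
          apply (Nat.Prime.coprime_iff_not_dvd hpp).mpr
          intro h
          rcases (Nat.Prime.dvd_mul hpp).mp h with h4 | h4
          · have h4' : p ∣ 2 ^ 2 := by simpa using h4
            have : p ∣ 2 := hpp.dvd_of_dvd_pow h4'
            exact hp2 ((Nat.prime_dvd_prime_iff_eq hpp (by norm_num)).mp this)
          · exact hpe h4
        obtain ⟨y, hy⟩ := aux_sq_neg_three hpp hp3
        set φ := ZMod.chineseRemainder hcop with hφdef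
        obtain ⟨x', hx'⟩ := ZMod.intCast_surjective
          (φ.symm (((x : ℤ) : ZMod (4 * e)), ((y : ℤ) : ZMod p)))
        have hφ1 : φ ((x' : ℤ) : ZMod (4 * e * p))
            = (((x : ℤ) : ZMod (4 * e)), ((y : ℤ) : ZMod p)) := by
          rw [hx', RingEquiv.apply_symm_apply]
        have hφ2 : φ ((x' : ℤ) : ZMod (4 * e * p))
            = (((x' : ℤ) : ZMod (4 * e)), ((x' : ℤ) : ZMod p)) := by
          rw [map_intCast]
          ext <;> simp
        rw [hφ2] at hφ1
        have hc1 : ((x' : ℤ) : ZMod (4 * e)) = ((x : ℤ) : ZMod (4 * e)) :=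
          congrArg Prod.fst hφ1
        have hc2 : ((x' : ℤ) : ZMod p) = ((y : ℤ) : ZMod p) :=
          congrArg Prod.snd hφ1
        refine ⟨x', ?_⟩
        have hdvd1 : ((4 * e : ℕ) : ℤ) ∣ x' ^ 2 + 3 := by
          apply (ZMod.intCast_zmod_eq_zero_iff_dvd _ _).mp
          push_cast
          rw [hc1]
          have h0 : ((x ^ 2 + 3 : ℤ) : ZMod (4 * e)) = 0 := by
            apply (ZMod.intCast_zmod_eq_zero_iff_dvd _ _).mpr
            push_cast
            exact hx
          push_cast at h0
          linear_combination h0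
        have hdvd2 : ((p : ℕ) : ℤ) ∣ x' ^ 2 + 3 := by
          apply (ZMod.intCast_zmod_eq_zero_iff_dvd _ _).mp
          push_cast
          rw [hc2]
          have h0 : ((y ^ 2 + 3 : ℤ) : ZMod p) = 0 :=
            (ZMod.intCast_zmod_eq_zero_iff_dvd _ p).mpr hy
          push_cast at h0
          linear_combination h0
        have hiscop : IsCoprime ((4 * e : ℕ) : ℤ) ((p : ℕ) : ℤ) :=
          Nat.isCoprime_iff_coprime.mpr hcop
        have := hiscop.mul_dvd hdvd1 hdvd2
        have heq : (4 * (d : ℤ)) = ((4 * e : ℕ) : ℤ) * ((p : ℕ) : ℤ) := by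
          rw [he]; push_cast; ring
        rw [heq]
        exact this

/-- For an integer `d ≥ 1`, the congruence `x² + 3 ≡ 0 (mod 4d)` has a
solution with `gcd(x, 2d) = 1` if and only if `d` is odd and every prime divisor `q` of
`d` satisfies `q ≡ 1 (mod 3)`. -/
theorem degree_18d_congruence (d : ℕ) (hd : 1 ≤ d) :
    (∃ x : ℤ, Int.gcd x (2 * (d : ℤ)) = 1 ∧ (4 * (d : ℤ)) ∣ (x ^ 2 + 3)) ↔
      (Odd d ∧ ∀ q : ℕ, q.Prime → q ∣ d → q % 3 = 1) := by
  constructor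
  · rintro ⟨x, hgcd, hdvd⟩
    have hco : IsCoprime x (2 * (d : ℤ)) := Int.isCoprime_iff_gcd_eq_one.mpr hgcd
    have hx2 : ¬ (2 : ℤ) ∣ x := by
      intro h2x
      obtain ⟨u, v, huv⟩ := hco
      have : (2 : ℤ) ∣ 1 := by
        rw [← huv]
        exact dvd_add (Dvd.dvd.mul_left h2x u) (Dvd.dvd.mul_left (dvd_mul_right 2 (d : ℤ)) v)
      norm_num at this
    have hodd : Odd d := by
      rw [Nat.odd_iff]
      by_contra h
      have h2d : 2 ∣ d := by omega
      obtain ⟨m, hm⟩ := h2d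
      have hxodd : Odd x := Int.not_even_iff_odd.mp (fun he => hx2 he.two_dvd)
      obtain ⟨k, hk⟩ := hxodd
      obtain ⟨c, hc⟩ := hdvd
      have hkk : Even (k * k + k) := by
        have := Int.even_mul_succ_self k
        rwa [mul_add, mul_one] at this
      obtain ⟨j, hj⟩ := hkk
      rw [hk, hm] at hc
      push_cast at hc
      have hc' : 8 * (m : ℤ) * c = 8 * j + 4 := by linear_combination -hc + 4 * hj
      have h8 : (8 : ℤ) ∣ 8 * (m : ℤ) * c := ⟨(m : ℤ) * c, by ring⟩
      rw [hc'] at h8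
      omega
    refine ⟨hodd, fun q hqp hqd => ?_⟩
    have hq2 : q ≠ 2 := by
      rintro rfl
      rw [Nat.odd_iff] at hodd
      omega
    have hqdvd : (q : ℤ) ∣ x ^ 2 + 3 := by
      refine dvd_trans ?_ hdvd
      exact Dvd.dvd.mul_left (Int.natCast_dvd_natCast.mpr hqd) 4
    have hqx : ¬ (q : ℤ) ∣ x := by
      intro h
      obtain ⟨u, v, huv⟩ := hco
      have : (q : ℤ) ∣ 1 := by
        rw [← huv]
        refine dvd_add (Dvd.dvd.mul_left h u) (Dvd.dvd.mul_left ?_ v)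
        exact Dvd.dvd.mul_left (Int.natCast_dvd_natCast.mpr hqd) 2
      have : q ∣ 1 := by exact_mod_cast this
      have := Nat.le_of_dvd one_pos this
      have := hqp.two_le
      omega
    exact aux_mod_three hqp hq2 hqdvd hqx
  · rintro ⟨hodd, hq⟩
    obtain ⟨x, hx⟩ := aux_exists_sol d hd hq
    refine ⟨x, ?_, hx⟩
    by_contra hg
    set g := Int.gcd x (2 * (d : ℤ)) with hgdef
    have hg0 : g ≠ 0 := by
      intro h
      have := Int.gcd_eq_zero_iff.mp h
      have h2d : (2 : ℤ) * d = 0 := this.2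
      have : (d : ℤ) ≠ 0 := by positivity
      omega
    have hg2 : 2 ≤ g := by omega
    set r := g.minFac with hrdef
    have hrp : r.Prime := Nat.minFac_prime (by omega)
    have hrg : r ∣ g := Nat.minFac_dvd g
    have hrx : (r : ℤ) ∣ x := dvd_trans (Int.natCast_dvd_natCast.mpr hrg) (Int.gcd_dvd_left _ _)
    have hr2d : (r : ℤ) ∣ 2 * (d : ℤ) :=
      dvd_trans (Int.natCast_dvd_natCast.mpr hrg) (Int.gcd_dvd_right _ _)
    have hrx3 : (r : ℤ) ∣ x ^ 2 + 3 := dvd_trans (hr2d.mul_left 2) (by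
      have : (4 : ℤ) * d = 2 * (2 * d) := by ring
      rwa [← this])
    have hr3 : (r : ℤ) ∣ 3 := by
      obtain ⟨c, hc⟩ := hrx3
      obtain ⟨k, hk⟩ := hrx
      exact ⟨c - r * k ^ 2, by rw [hk] at hc; linarith⟩
    have hr3' : r ∣ 3 := by exact_mod_cast hr3
    have hr3eq : r = 3 := (Nat.prime_dvd_prime_iff_eq hrp (by norm_num)).mp hr3'
    rw [hr3eq] at hr2d
    have h32d : (3 : ℕ) ∣ 2 * d := by exact_mod_cast hr2d
    have h3d : 3 ∣ d := by
      rcases (Nat.Prime.dvd_mul (by norm_num)).mp h32d with h | h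
      · omega
      · exact h
    have := hq 3 (by norm_num) h3d
    omega
end

section
/- Let K be a field of characteristic different from 2, let q be a nondegenerate quadratic form on a K-vector space V of even dimension 2n, and let Δ = (−1)ⁿ·det(M) be its signed discriminant, where M is a Gram matrix of q; assume Δ is not a square in K, and set L = K[X]/(X² − Δ) ≅ K(√Δ). Write C(q) for the Clifford algebra of q, with even part C₀(q) and odd part C₁(q), and regard C(q) = C₀(q) ⊕ C₁(q) as a right C₀(q)-module. Then the K-linear map V ⊗_K L → End_{C₀(q)}(C₀(q) ⊕ C₁(q)) sending v ⊗ 1 to left multiplication by v extends, by the universal property of the Clifford algebra, to an isomorphism of K-algebras C(q) ⊗_K L ≅ End_{C₀(q)}(C₀(q) ⊕ C₁(q)). Consequently, the Brauer class c₀(q) of C₀(q) in Br(L) equals the restriction c(q) ⊗_K L of the Brauer class of C(q). -/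
open scoped TensorProduct

section Helpers

variable {K : Type*} [Field K]

section AlgebraHelpers
variable {A : Type*} [Ring A] [Algebra K A]

lemma commute_aeval' {a b : A} (h : Commute a b) (p : Polynomial K) :
    Commute b (Polynomial.aeval a p) := by
  induction p using Polynomial.induction_on' with
  | add p q hp hq => rw [map_add]; exact hp.add_right hq
  | monomial n c =>
    rw [Polynomial.aeval_monomial]
    have h1 : Commute b ((algebraMap K A) c) := (Algebra.commutes c b).symm
    exact h1.mul_right (h.symm.pow_right n)

/-- Lift to an algebra hom out of `AdjoinRoot f` with possibly noncommutative target. -/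
noncomputable def adjoinRootLift (f : Polynomial K) (x : A) (hx : Polynomial.aeval x f = 0) :
    AdjoinRoot f →ₐ[K] A :=
  Ideal.Quotient.liftₐ _ (Polynomial.aeval x) (fun a ha => by
    obtain ⟨c, rfl⟩ := Ideal.mem_span_singleton'.mp ha
    rw [map_mul, hx, mul_zero])

lemma adjoinRootLift_mk (f : Polynomial K) (x : A) (hx : Polynomial.aeval x f = 0)
    (p : Polynomial K) : adjoinRootLift f x hx (AdjoinRoot.mk f p) = Polynomial.aeval x p :=
  Ideal.Quotient.lift_mk _ _ _

lemma adjoinRootLift_root (f : Polynomial K) (x : A) (hx : Polynomial.aeval x f = 0) :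
    adjoinRootLift f x hx (AdjoinRoot.root f) = x := by
  rw [AdjoinRoot.root, adjoinRootLift_mk, Polynomial.aeval_X]

end AlgebraHelpers

section CliffordHelpers

variable {V : Type*} [AddCommGroup V] [Module K V] (Q : QuadraticForm K V)

open CliffordAlgebra

lemma list_prod_mul_iota (l : List V) (v : V) (ε : V → K)
    (h : ∀ x ∈ l, ι Q x * ι Q v = ε x • (ι Q v * ι Q x)) :
    (l.map (ι Q)).prod * ι Q v = (l.map ε).prod • (ι Q v * (l.map (ι Q)).prod) := by
  induction l with
  | nil => simp
  | cons x l ih =>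
    have hx := h x List.mem_cons_self
    have ih' := ih (fun y hy => h y (List.mem_cons_of_mem _ hy))
    simp only [List.map_cons, List.prod_cons]
    calc ι Q x * (l.map (ι Q)).prod * ι Q v
        = ι Q x * ((l.map (ι Q)).prod * ι Q v) := by rw [mul_assoc]
      _ = (l.map ε).prod • (ι Q x * (ι Q v * (l.map (ι Q)).prod)) := by
          rw [ih', mul_smul_comm]
      _ = (l.map ε).prod • ((ι Q x * ι Q v) * (l.map (ι Q)).prod) := by rw [mul_assoc]
      _ = ((l.map ε).prod * ε x) • (ι Q v * ι Q x * (l.map (ι Q)).prod) := by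
          rw [hx, smul_mul_assoc, smul_smul]
      _ = (ε x * (l.map ε).prod) • (ι Q v * (ι Q x * (l.map (ι Q)).prod)) := by
          rw [mul_comm, mul_assoc]

lemma list_prod_sq (l : List V) (h : l.Pairwise fun x y => QuadraticMap.polar Q x y = 0) :
    (l.map (ι Q)).prod * (l.map (ι Q)).prod
      = ((-1 : K) ^ (l.length.choose 2) * (l.map Q).prod) • 1 := by
  induction l with
  | nil => simp
  | cons x l ih =>
    obtain ⟨hx, hl⟩ := List.pairwise_cons.mp h
    have anti : ∀ y ∈ l, ι Q y * ι Q x = (fun _ => (-1 : K)) y • (ι Q x * ι Q y) := by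
      intro y hy
      have hp : QuadraticMap.polar Q y x = 0 := by
        rw [QuadraticMap.polar_comm]; exact hx y hy
      rw [ι_mul_ι_comm, hp, map_zero, zero_sub, neg_one_smul]
    have key := list_prod_mul_iota Q l x (fun _ => (-1 : K)) anti
    have hconst : (l.map fun _ => (-1 : K)).prod = (-1 : K) ^ l.length := by
      rw [List.map_const', List.prod_replicate]
    have hchoose : (l.length + 1).choose 2 = l.length.choose 2 + l.length := by
      rw [Nat.choose_succ_succ, Nat.choose_one_right, Nat.add_comm]
    simp only [List.map_cons, List.prod_cons, List.length_cons]
    calc ι Q x * (l.map (ι Q)).prod * (ι Q x * (l.map (ι Q)).prod)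
        = ι Q x * ((l.map (ι Q)).prod * ι Q x) * (l.map (ι Q)).prod := by
          simp only [mul_assoc]
      _ = ((-1 : K) ^ l.length) • (ι Q x * (ι Q x * (l.map (ι Q)).prod) * (l.map (ι Q)).prod) := by
          rw [key, hconst, mul_smul_comm, smul_mul_assoc]
      _ = ((-1 : K) ^ l.length) • (ι Q x * ι Q x * ((l.map (ι Q)).prod * (l.map (ι Q)).prod)) := by
          simp only [mul_assoc]
      _ = ((-1 : K) ^ (l.length + 1).choose 2 * (Q x * (l.map Q).prod)) • 1 := by
          rw [ι_sq_scalar, ih hl, Algebra.algebraMap_eq_smul_one, smul_mul_assoc, one_mul,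
            smul_smul, smul_smul, hchoose, pow_add]
          ring_nf

end CliffordHelpers

end Helpers

/-- The endomorphism algebra `End_{C₀(q)}(C₀(q) ⊕ C₁(q))`: the subalgebra of
`End_K(C(q))` consisting of the `K`-linear endomorphisms of `C(q) = C₀(q) ⊕ C₁(q)` that
commute with right multiplication by elements of the even Clifford algebra `C₀(q)`. -/
def evenCliffordRightEnd {K : Type*} [Field K] {V : Type*} [AddCommGroup V] [Module K V]
    (Q : QuadraticForm K V) : Subalgebra K (Module.End K (CliffordAlgebra Q)) where
  carrier := {f | ∀ z : CliffordAlgebra Q, ∀ s ∈ CliffordAlgebra.even Q, f (z * s) = f z * s}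
  mul_mem' := by
    intro f g hf hg z s hs
    simp only [Module.End.mul_apply]
    rw [hg z s hs, hf (g z) s hs]
  one_mem' := by intro z s hs; rfl
  add_mem' := by
    intro f g hf hg z s hs
    simp only [LinearMap.add_apply, hf z s hs, hg z s hs, add_mul]
  zero_mem' := by intro z s hs; simp
  algebraMap_mem' := by
    intro r z s hs
    simp [Module.algebraMap_end_apply, smul_mul_assoc]

lemma mem_evenCliffordRightEnd {K : Type*} [Field K] {V : Type*} [AddCommGroup V] [Module K V]
    {Q : QuadraticForm K V} {f : Module.End K (CliffordAlgebra Q)} :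
    f ∈ evenCliffordRightEnd Q ↔
      ∀ z : CliffordAlgebra Q, ∀ s ∈ CliffordAlgebra.even Q, f (z * s) = f z * s :=
  Iff.rfl

set_option maxHeartbeats 2000000 in
/-- Let `q` be a nondegenerate quadratic form of even rank `2n` over a
field `K` of characteristic `≠ 2` whose signed discriminant `Δ = (−1)ⁿ det M` (for a Gram
matrix `M`) is not a square, and let `L = K[X]/(X² − Δ)`.  Then the map sending `v ⊗ 1`
to left multiplication by `v` extends to a `K`-algebra isomorphism
`C(q) ⊗_K L ≅ End_{C₀(q)}(C₀(q) ⊕ C₁(q))`.  (Consequently `c₀(q) = c(q) ⊗_K L` in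
`Br(L)`.) -/

theorem clifford_base_change_even_end (K : Type*) [Field K] [Invertible (2 : K)]
    (V : Type*) [AddCommGroup V] [Module K V] [FiniteDimensional K V]
    (n : ℕ) (hn : Module.finrank K V = 2 * n)
    (Q : QuadraticForm K V)
    (hQ : ∀ v : V, (∀ w : V, QuadraticMap.polar Q v w = 0) → v = 0)
    (b : Module.Basis (Fin (2 * n)) K V)
    (Δ : K)
    (hΔdef : Δ = (-1) ^ n * (LinearMap.toMatrix₂ b b (QuadraticMap.associated Q)).det)
    (hΔ : ∀ t : K, t ^ 2 ≠ Δ) :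
    ∃ φ : (CliffordAlgebra Q ⊗[K]
            AdjoinRoot (Polynomial.X ^ 2 - Polynomial.C Δ)) ≃ₐ[K] evenCliffordRightEnd Q,
      ∀ (v : V) (z : CliffordAlgebra Q),
        (φ (CliffordAlgebra.ι Q v ⊗ₜ[K] 1) : Module.End K (CliffordAlgebra Q)) z
          = CliffordAlgebra.ι Q v * z := by
  classical
  open CliffordAlgebra Polynomial in
  -- rule out `n = 0`
  rcases Nat.eq_zero_or_pos n with hn0 | hpos
  · exfalso
    subst hn0
    refine hΔ 1 ?_
    haveI : IsEmpty (Fin (2 * 0)) := by rw [Nat.mul_zero]; infer_instance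
    rw [hΔdef, Matrix.det_isEmpty]
    norm_num
  have hΔ0 : Δ ≠ 0 := fun h => hΔ 0 (by rw [h]; ring)
  -- orthogonal basis
  obtain ⟨e, he⟩ := LinearMap.BilinForm.exists_orthogonal_basis
    (B := QuadraticMap.associated Q) ⟨fun x y => QuadraticMap.associated_isSymm K Q x y⟩
  set f : Module.Basis (Fin (2 * n)) K V := e.reindex (finCongr hn) with hf
  have hfe : ∀ i, f i = e ((finCongr hn).symm i) := fun i => Module.Basis.reindex_apply _ _ _
  have hBf : ∀ i j : Fin (2 * n), i ≠ j → QuadraticMap.associated Q (f i) (f j) = 0 := by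
    intro i j hij
    rw [hfe, hfe]
    exact he (fun hc => hij (by simpa using (finCongr hn).symm.injective hc))
  have horth : ∀ i j : Fin (2 * n), i ≠ j → QuadraticMap.polar Q (f i) (f j) = 0 := by
    intro i j hij
    have key := QuadraticMap.two_nsmul_associated K Q
    have := congrArg (fun B : LinearMap.BilinForm K V => B (f i) (f j)) key
    simp only [LinearMap.smul_apply, QuadraticMap.polarBilin_apply_apply] at this
    rw [← this, hBf i j hij, smul_zero]
  have hQf : ∀ i, QuadraticMap.associated Q (f i) (f i) = Q (f i) := fun i =>
    QuadraticMap.associated_eq_self_apply K Q _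
  -- the Gram matrix in the orthogonal basis is diagonal
  have hMf : LinearMap.toMatrix₂ f f (QuadraticMap.associated Q)
      = Matrix.diagonal (fun i => Q (f i)) := by
    ext i j
    by_cases h : i = j
    · subst h
      rw [LinearMap.toMatrix₂_apply, Matrix.diagonal_apply_eq, hQf]
    · rw [LinearMap.toMatrix₂_apply, Matrix.diagonal_apply_ne _ h, hBf i j h]
  have hdet : (LinearMap.toMatrix₂ b b (QuadraticMap.associated Q)).det
      = (f.toMatrix b).det ^ 2 * ∏ i, Q (f i) := by
    have hM := LinearMap.toMatrix₂_mul_basis_toMatrix (b₁ := f) (b₂ := f) b b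
      (QuadraticMap.associated Q)
    rw [← hM, Matrix.det_mul, Matrix.det_mul, Matrix.det_transpose, hMf, Matrix.det_diagonal]
    ring
  have hΔ' : Δ = (f.toMatrix b).det ^ 2 * ((-1) ^ n * ∏ i, Q (f i)) := by
    rw [hΔdef, hdet]; ring
  have hdP : (f.toMatrix b).det ≠ 0 := by
    intro h
    exact hΔ0 (by rw [hΔ', h]; ring)
  have hprod : (∏ i, Q (f i)) ≠ 0 := by
    intro h
    exact hΔ0 (by rw [hΔ', h]; ring)
  have hQfne : ∀ i, Q (f i) ≠ 0 := fun i =>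
    Finset.prod_ne_zero_iff.mp hprod i (Finset.mem_univ i)
  -- the volume element
  set l : List V := List.ofFn (fun i : Fin (2 * n) => f i) with hldef
  set ω₀ : CliffordAlgebra Q := (l.map (CliffordAlgebra.ι Q)).prod with hω₀def
  have hllen : l.length = 2 * n := List.length_ofFn
  have hω₀v : ∀ j, ω₀ * CliffordAlgebra.ι Q (f j) = -(CliffordAlgebra.ι Q (f j) * ω₀) := by
    intro j
    have hmem : ∀ x ∈ l, CliffordAlgebra.ι Q x * CliffordAlgebra.ι Q (f j)
        = (fun x => if x = f j then (1 : K) else -1) x •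
          (CliffordAlgebra.ι Q (f j) * CliffordAlgebra.ι Q x) := by
      intro x hx
      have hx' : x ∈ Set.range (fun i : Fin (2 * n) => f i) := by
        rw [hldef] at hx; exact List.mem_ofFn.mp hx
      obtain ⟨i, rfl⟩ := hx'
      beta_reduce
      by_cases hij : f i = f j
      · rw [hij, if_pos rfl, one_smul]
      · rw [if_neg hij]
        have hij' : i ≠ j := fun hc => hij (by rw [hc])
        rw [CliffordAlgebra.ι_mul_ι_comm, horth i j hij', map_zero, zero_sub, neg_one_smul]
    have key := list_prod_mul_iota Q l (f j) _ hmem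
    have hεprod : (l.map fun x => if x = f j then (1 : K) else -1).prod = -1 := by
      rw [hldef, List.map_ofFn, List.prod_ofFn]
      have hstep : ∀ i : Fin (2 * n),
          ((fun x => if x = f j then (1 : K) else -1) ∘ fun i => f i) i
            = if i = j then (1 : K) else -1 := by
        intro i
        by_cases hij : i = j
        · subst hij; simp
        · have : f i ≠ f j := fun hc => hij (f.injective hc)
          simp [hij, this]
      rw [Finset.prod_congr rfl (fun i _ => hstep i)]
      rw [← Finset.mul_prod_erase Finset.univ _ (Finset.mem_univ j), if_pos rfl, one_mul]
      have : ∀ i ∈ Finset.univ.erase j, (if i = j then (1 : K) else -1) = -1 := by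
        intro i hi
        rw [if_neg (Finset.mem_erase.mp hi).1]
      rw [Finset.prod_congr rfl this, Finset.prod_const, Finset.card_erase_of_mem
        (Finset.mem_univ j), Finset.card_univ, Fintype.card_fin]
      exact Odd.neg_one_pow ⟨n - 1, by omega⟩
    rw [key, hεprod, neg_one_smul]
  have hω₀vv : ∀ v : V, ω₀ * CliffordAlgebra.ι Q v = -(CliffordAlgebra.ι Q v * ω₀) := by
    have hmaps : (LinearMap.mulLeft K ω₀).comp (CliffordAlgebra.ι Q)
        = -((LinearMap.mulRight K ω₀).comp (CliffordAlgebra.ι Q)) := by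
      apply f.ext
      intro j
      simp only [LinearMap.comp_apply, LinearMap.mulLeft_apply, LinearMap.neg_apply,
        LinearMap.mulRight_apply]
      exact hω₀v j
    intro v
    have := LinearMap.congr_fun hmaps v
    simpa only [LinearMap.comp_apply, LinearMap.mulLeft_apply, LinearMap.neg_apply,
      LinearMap.mulRight_apply] using this
  have hω₀sq : ω₀ * ω₀ = ((-1 : K) ^ n * ∏ i, Q (f i)) • 1 := by
    have hpair : l.Pairwise fun x y => QuadraticMap.polar Q x y = 0 := by
      rw [hldef, List.pairwise_ofFn]
      intro i j hij
      exact horth i j (ne_of_lt hij)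
    have key := list_prod_sq Q l hpair
    have hQprod : (l.map Q).prod = ∏ i, Q (f i) := by
      rw [hldef, List.map_ofFn, List.prod_ofFn]; rfl
    have hsign : (-1 : K) ^ (l.length.choose 2) = (-1 : K) ^ n := by
      rw [hllen, Nat.choose_two_right]
      have h1 : 2 * n * (2 * n - 1) / 2 = n * (2 * n - 1) := by
        rw [mul_assoc, Nat.mul_div_cancel_left _ (by norm_num : (0:ℕ) < 2)]
      rw [h1, pow_mul]
      rcases Nat.even_or_odd n with hev | hod
      · simp [hev.neg_one_pow]
      · rw [hod.neg_one_pow]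
        exact Odd.neg_one_pow ⟨n - 1, by omega⟩
    rw [key, hQprod, hsign]
  -- the rescaled volume element with square exactly Δ
  set ω : CliffordAlgebra Q := (f.toMatrix b).det • ω₀ with hωdef
  have hωsq : ω * ω = Δ • (1 : CliffordAlgebra Q) := by
    rw [hωdef, smul_mul_assoc, mul_smul_comm, smul_smul, hω₀sq, smul_smul, hΔ']
    ring_nf
  have hωv : ∀ v : V, ω * CliffordAlgebra.ι Q v = -(CliffordAlgebra.ι Q v * ω) := by
    intro v
    rw [hωdef, smul_mul_assoc, hω₀vv v, mul_smul_comm, smul_neg]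
  have hωeven : ∀ s ∈ CliffordAlgebra.evenOdd Q 0, ω * s = s * ω := by
    intro s hs
    induction s, hs using CliffordAlgebra.even_induction with
    | algebraMap r => exact (Algebra.commutes r ω).symm
    | add x y hx hy ihx ihy => rw [mul_add, add_mul, ihx, ihy]
    | ι_mul_ι_mul m₁ m₂ x hx ih =>
      calc ω * (CliffordAlgebra.ι Q m₁ * CliffordAlgebra.ι Q m₂ * x)
          = (ω * CliffordAlgebra.ι Q m₁) * (CliffordAlgebra.ι Q m₂ * x) := by
            simp only [mul_assoc]
        _ = -((CliffordAlgebra.ι Q m₁ * ω) * (CliffordAlgebra.ι Q m₂ * x)) := by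
            rw [hωv m₁, neg_mul]
        _ = -(CliffordAlgebra.ι Q m₁ * ((ω * CliffordAlgebra.ι Q m₂) * x)) := by
            simp only [mul_assoc]
        _ = -(CliffordAlgebra.ι Q m₁ * (-((CliffordAlgebra.ι Q m₂ * ω) * x))) := by
            rw [hωv m₂, neg_mul]
        _ = CliffordAlgebra.ι Q m₁ * (CliffordAlgebra.ι Q m₂ * (ω * x)) := by
            simp only [mul_neg, neg_neg, mul_assoc]
        _ = CliffordAlgebra.ι Q m₁ * CliffordAlgebra.ι Q m₂ * x * ω := by
            rw [ih]; simp only [mul_assoc]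
  have hmemiff : ∀ s : CliffordAlgebra Q,
      s ∈ CliffordAlgebra.even Q ↔ s ∈ CliffordAlgebra.evenOdd Q 0 := fun s => by
    rw [← Subalgebra.mem_toSubmodule, CliffordAlgebra.even_toSubmodule]
  -- left multiplication lands in the endomorphism algebra
  have hlmul_mem : ∀ x : CliffordAlgebra Q,
      Algebra.lmul K (CliffordAlgebra Q) x ∈ evenCliffordRightEnd Q := by
    intro x
    rw [mem_evenCliffordRightEnd]
    intro z s hs
    simp only [Algebra.coe_lmul_eq_mul, LinearMap.mul_apply']
    rw [mul_assoc]
  set lamS : CliffordAlgebra Q →ₐ[K] evenCliffordRightEnd Q :=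
    (Algebra.lmul K (CliffordAlgebra Q)).codRestrict (evenCliffordRightEnd Q) hlmul_mem
    with hlamSdef
  have hlamS_coe : ∀ (x z : CliffordAlgebra Q),
      ((lamS x : Module.End K (CliffordAlgebra Q))) z = x * z := by
    intro x z
    rw [hlamSdef]
    simp [AlgHom.coe_codRestrict, Algebra.coe_lmul_eq_mul, LinearMap.mul_apply']
  -- right multiplication by ω lands there too
  have hrho_mem : LinearMap.mulRight K ω ∈ evenCliffordRightEnd Q := by
    rw [mem_evenCliffordRightEnd]
    intro z s hs
    simp only [LinearMap.mulRight_apply]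
    rw [mul_assoc, ← hωeven s ((hmemiff s).mp hs), ← mul_assoc]
  set xS : evenCliffordRightEnd Q := ⟨LinearMap.mulRight K ω, hrho_mem⟩ with hxSdef
  have hxSsq : xS * xS = algebraMap K (evenCliffordRightEnd Q) Δ := by
    apply Subtype.ext
    rw [MulMemClass.coe_mul, hxSdef]
    apply LinearMap.ext
    intro z
    simp only [Module.End.mul_apply, LinearMap.mulRight_apply, Subalgebra.coe_algebraMap,
      Module.algebraMap_end_apply]
    rw [mul_assoc, hωsq, mul_smul_comm, mul_one]
  have hxSroot : Polynomial.aeval xS (Polynomial.X ^ 2 - Polynomial.C Δ) = 0 := by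
    rw [map_sub, Polynomial.aeval_X_pow, Polynomial.aeval_C, pow_two, hxSsq, sub_self]
  set rhoS : AdjoinRoot (Polynomial.X ^ 2 - Polynomial.C Δ) →ₐ[K] evenCliffordRightEnd Q :=
    adjoinRootLift _ xS hxSroot with hrhoSdef
  -- the images commute
  have hcomm : ∀ (x : CliffordAlgebra Q)
      (y : AdjoinRoot (Polynomial.X ^ 2 - Polynomial.C Δ)), Commute (lamS x) (rhoS y) := by
    intro x y
    induction y using AdjoinRoot.induction_on with
    | ih p =>
      rw [hrhoSdef, adjoinRootLift_mk]
      refine commute_aeval' (a := xS) ?_ p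
      show xS * lamS x = lamS x * xS
      apply Subtype.ext
      rw [MulMemClass.coe_mul, MulMemClass.coe_mul]
      apply LinearMap.ext
      intro z
      simp only [Module.End.mul_apply, hxSdef, LinearMap.mulRight_apply]
      rw [hlamS_coe, hlamS_coe, mul_assoc]
  set psi : (CliffordAlgebra Q ⊗[K] AdjoinRoot (Polynomial.X ^ 2 - Polynomial.C Δ))
      →ₐ[K] evenCliffordRightEnd Q := Algebra.TensorProduct.lift lamS rhoS hcomm with hpsidef
  have hpsi1 : ∀ x : CliffordAlgebra Q, psi (x ⊗ₜ[K] 1) = lamS x := by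
    intro x
    rw [hpsidef, Algebra.TensorProduct.lift_tmul, map_one, mul_one]
  have hpsiroot : ∀ y : CliffordAlgebra Q,
      psi (y ⊗ₜ[K] AdjoinRoot.root (Polynomial.X ^ 2 - Polynomial.C Δ)) = lamS y * xS := by
    intro y
    rw [hpsidef, Algebra.TensorProduct.lift_tmul, hrhoSdef, adjoinRootLift_root]
  have happly : ∀ (x y z : CliffordAlgebra Q),
      ((psi (x ⊗ₜ[K] 1 + y ⊗ₜ[K] AdjoinRoot.root (Polynomial.X ^ 2 - Polynomial.C Δ)) :
        evenCliffordRightEnd Q) : Module.End K (CliffordAlgebra Q)) z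
        = x * z + y * (z * ω) := by
    intro x y z
    rw [map_add, hpsi1, hpsiroot, AddMemClass.coe_add, MulMemClass.coe_mul, LinearMap.add_apply,
      Module.End.mul_apply, hlamS_coe, hlamS_coe]
    rfl
  -- the root and its square
  set rt : AdjoinRoot (Polynomial.X ^ 2 - Polynomial.C Δ) :=
    AdjoinRoot.root (Polynomial.X ^ 2 - Polynomial.C Δ) with hrtdef
  have hrt2 : rt ^ 2 = algebraMap K (AdjoinRoot (Polynomial.X ^ 2 - Polynomial.C Δ)) Δ := by
    have h0 := AdjoinRoot.mk_self (f := Polynomial.X ^ 2 - Polynomial.C Δ)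
    rw [map_sub, map_pow, AdjoinRoot.mk_X, AdjoinRoot.mk_C, sub_eq_zero] at h0
    rw [hrtdef, h0]
    rfl
  -- every element of the quadratic extension is `a + b √Δ`
  have hLrep : ∀ lv : AdjoinRoot (Polynomial.X ^ 2 - Polynomial.C Δ),
      ∃ a bb : K, lv = algebraMap K _ a + bb • rt := by
    have hpow : ∀ m : ℕ, ∃ a bb : K, rt ^ m = algebraMap K _ a + bb • rt := by
      intro m
      induction m using Nat.strong_induction_on with
      | _ m ih =>
        match m with
        | 0 => exact ⟨1, 0, by simp⟩
        | 1 => exact ⟨0, 1, by simp⟩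
        | (m + 2) =>
          obtain ⟨a, bb, h⟩ := ih m (by omega)
          refine ⟨Δ * a, Δ * bb, ?_⟩
          rw [pow_add, hrt2, h, add_mul, Algebra.smul_def, Algebra.smul_def, map_mul, map_mul]
          ring
    intro lv
    induction lv using AdjoinRoot.induction_on with
    | ih p =>
      induction p using Polynomial.induction_on' with
      | add p q hp hq =>
        obtain ⟨a1, b1, h1⟩ := hp
        obtain ⟨a2, b2, h2⟩ := hq
        refine ⟨a1 + a2, b1 + b2, ?_⟩
        rw [map_add, h1, h2, map_add, add_smul]
        abel
      | monomial m c =>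
        obtain ⟨a, bb, h⟩ := hpow m
        refine ⟨c * a, c * bb, ?_⟩
        rw [← Polynomial.C_mul_X_pow_eq_monomial, map_mul, map_pow, AdjoinRoot.mk_X,
          AdjoinRoot.mk_C, ← hrtdef, h, mul_add, Algebra.smul_def, Algebra.smul_def,
          map_mul, map_mul, ← AdjoinRoot.algebraMap_eq]
        ring
  -- every element of the tensor product is `x ⊗ 1 + y ⊗ √Δ`
  have hrep : ∀ t : CliffordAlgebra Q ⊗[K] AdjoinRoot (Polynomial.X ^ 2 - Polynomial.C Δ),
      ∃ x y : CliffordAlgebra Q, t = x ⊗ₜ[K] 1 + y ⊗ₜ[K] rt := by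
    intro t
    induction t using TensorProduct.induction_on with
    | zero => exact ⟨0, 0, by simp⟩
    | tmul c lv =>
      obtain ⟨a, bb, h⟩ := hLrep lv
      refine ⟨a • c, bb • c, ?_⟩
      rw [h, TensorProduct.tmul_add]
      congr 1
      · rw [Algebra.algebraMap_eq_smul_one, TensorProduct.tmul_smul, TensorProduct.smul_tmul']
      · rw [TensorProduct.tmul_smul, TensorProduct.smul_tmul']
    | add t1 t2 h1 h2 =>
      obtain ⟨x1, y1, e1⟩ := h1
      obtain ⟨x2, y2, e2⟩ := h2
      refine ⟨x1 + x2, y1 + y2, ?_⟩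
      rw [e1, e2, TensorProduct.add_tmul, TensorProduct.add_tmul]
      abel
  -- an invertible odd vector
  set j0 : Fin (2 * n) := ⟨0, by omega⟩ with hj0def
  set uc : CliffordAlgebra Q := CliffordAlgebra.ι Q (f j0) with hucdef
  have hQu : Q (f j0) ≠ 0 := hQfne j0
  have huc : uc * uc = algebraMap K (CliffordAlgebra Q) (Q (f j0)) :=
    CliffordAlgebra.ι_sq_scalar Q (f j0)
  have hucω : uc * ω = -(ω * uc) := by rw [hωv (f j0), neg_neg]
  -- injectivity
  have hker : ∀ t : CliffordAlgebra Q ⊗[K] AdjoinRoot (Polynomial.X ^ 2 - Polynomial.C Δ),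
      psi t = 0 → t = 0 := by
    intro t ht
    obtain ⟨x, y, rfl⟩ := hrep t
    have h1 : x + y * ω = 0 := by
      have h := happly x y 1
      rw [ht] at h
      simpa using h.symm
    have h2 : x * uc + y * (uc * ω) = 0 := by
      have h := happly x y uc
      rw [ht] at h
      simpa using h.symm
    rw [hucω, mul_neg, ← sub_eq_add_neg] at h2
    have h3 : (x - y * ω) * (uc * uc) = 0 := by
      have h4 := congrArg (fun w => w * uc) h2
      simpa [sub_mul, mul_assoc] using h4
    rw [huc, Algebra.algebraMap_eq_smul_one, mul_smul_comm, mul_one] at h3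
    have h5 : x - y * ω = 0 := (smul_eq_zero.mp h3).resolve_left hQu
    have hxy : x = y * ω := by linear_combination (norm := abel) h5
    rw [hxy] at h1
    have h6 : (2 : K) • (y * ω) = 0 := by rw [two_smul]; exact h1
    have h7 : y * ω = 0 := (smul_eq_zero.mp h6).resolve_left (Invertible.ne_zero 2)
    have h8 : Δ • y = 0 := by
      have h9 := congrArg (fun w => w * ω) h7
      simpa [mul_assoc, hωsq, mul_smul_comm] using h9
    have hy : y = 0 := (smul_eq_zero.mp h8).resolve_left hΔ0
    have hx : x = 0 := by rw [hxy, hy, zero_mul]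
    rw [hx, hy]
    simp
  have hinj : Function.Injective psi := by
    intro t1 t2 h
    have := hker (t1 - t2) (by rw [map_sub, h, sub_self])
    exact sub_eq_zero.mp this
  -- decomposition of the Clifford algebra as even ⊕ uc * even
  have h00 : ∀ {a c : CliffordAlgebra Q}, a ∈ CliffordAlgebra.evenOdd Q 0 →
      c ∈ CliffordAlgebra.evenOdd Q 0 → a * c ∈ CliffordAlgebra.evenOdd Q 0 := by
    intro a c ha hc
    have h := SetLike.mul_mem_graded ha hc
    exact (by decide : ((0 : ZMod 2) + 0) = 0) ▸ h
  have h101 : ∀ {s : CliffordAlgebra Q}, s ∈ CliffordAlgebra.evenOdd Q 0 →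
      uc * s * uc ∈ CliffordAlgebra.evenOdd Q 0 := by
    intro s hs
    have h1 : uc ∈ CliffordAlgebra.evenOdd Q 1 := CliffordAlgebra.ι_mem_evenOdd_one Q (f j0)
    have h := SetLike.mul_mem_graded (SetLike.mul_mem_graded h1 hs) h1
    exact (by decide : ((1 : ZMod 2) + 0 + 1) = 0) ▸ h
  have hflip : ∀ s : CliffordAlgebra Q,
      s * uc = uc * ((Q (f j0))⁻¹ • (uc * s * uc)) := by
    intro s
    rw [mul_smul_comm]
    simp only [← mul_assoc]
    rw [huc, Algebra.algebraMap_eq_smul_one, smul_mul_assoc, smul_mul_assoc, one_mul,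
      smul_smul, inv_mul_cancel₀ hQu, one_smul]
  have Hdec : ∀ z : CliffordAlgebra Q, ∃ s₀ s₁ : CliffordAlgebra Q,
      s₀ ∈ CliffordAlgebra.evenOdd Q 0 ∧ s₁ ∈ CliffordAlgebra.evenOdd Q 0 ∧
        z = s₀ + uc * s₁ := by
    intro z
    induction z using CliffordAlgebra.induction with
    | algebraMap r =>
      exact ⟨algebraMap K _ r, 0, SetLike.algebraMap_mem_graded _ _, Submodule.zero_mem _,
        by simp⟩
    | ι m =>
      refine ⟨0, (Q (f j0))⁻¹ • (uc * CliffordAlgebra.ι Q m), Submodule.zero_mem _,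
        Submodule.smul_mem _ _ ?_, ?_⟩
      · have h1 : uc ∈ CliffordAlgebra.evenOdd Q 1 := CliffordAlgebra.ι_mem_evenOdd_one Q (f j0)
        have h := SetLike.mul_mem_graded h1 (CliffordAlgebra.ι_mem_evenOdd_one Q m)
        exact (by decide : ((1 : ZMod 2) + 1) = 0) ▸ h
      · rw [zero_add, mul_smul_comm, ← mul_assoc, huc, Algebra.algebraMap_eq_smul_one,
          smul_mul_assoc, one_mul, smul_smul, inv_mul_cancel₀ hQu, one_smul]
    | mul z w hz hw =>
      obtain ⟨s₀, s₁, hs₀, hs₁, rfl⟩ := hz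
      obtain ⟨t₀, t₁, ht₀, ht₁, rfl⟩ := hw
      refine ⟨s₀ * t₀ + Q (f j0) • (((Q (f j0))⁻¹ • (uc * s₁ * uc)) * t₁),
        ((Q (f j0))⁻¹ • (uc * s₀ * uc)) * t₁ + s₁ * t₀, ?_, ?_, ?_⟩
      · exact Submodule.add_mem _ (h00 hs₀ ht₀)
          (Submodule.smul_mem _ _ (h00 (Submodule.smul_mem _ _ (h101 hs₁)) ht₁))
      · exact Submodule.add_mem _ (h00 (Submodule.smul_mem _ _ (h101 hs₀)) ht₁) (h00 hs₁ ht₀)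
      · have e1 : s₀ * (uc * t₁) = uc * (((Q (f j0))⁻¹ • (uc * s₀ * uc)) * t₁) := by
          rw [← mul_assoc, hflip s₀, mul_assoc]
        have e2 : uc * s₁ * (uc * t₁) = Q (f j0) • (((Q (f j0))⁻¹ • (uc * s₁ * uc)) * t₁) := by
          calc uc * s₁ * (uc * t₁)
              = uc * ((s₁ * uc) * t₁) := by simp only [mul_assoc]
            _ = uc * ((uc * ((Q (f j0))⁻¹ • (uc * s₁ * uc))) * t₁) := by rw [hflip s₁]
            _ = (uc * uc) * (((Q (f j0))⁻¹ • (uc * s₁ * uc)) * t₁) := by simp only [mul_assoc]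
            _ = Q (f j0) • (((Q (f j0))⁻¹ • (uc * s₁ * uc)) * t₁) := by
                rw [huc, Algebra.algebraMap_eq_smul_one, smul_mul_assoc, one_mul]
        calc (s₀ + uc * s₁) * (t₀ + uc * t₁)
            = s₀ * t₀ + uc * s₁ * t₀ + (s₀ * (uc * t₁) + uc * s₁ * (uc * t₁)) := by
              rw [mul_add, add_mul, add_mul]
          _ = s₀ * t₀ + Q (f j0) • (((Q (f j0))⁻¹ • (uc * s₁ * uc)) * t₁)
              + uc * (((Q (f j0))⁻¹ • (uc * s₀ * uc)) * t₁ + s₁ * t₀) := by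
              rw [e1, e2, mul_add, ← mul_assoc, ← mul_assoc uc s₁ t₀]; abel
    | add z w hz hw =>
      obtain ⟨s₀, s₁, hs₀, hs₁, rfl⟩ := hz
      obtain ⟨t₀, t₁, ht₀, ht₁, rfl⟩ := hw
      exact ⟨s₀ + t₀, s₁ + t₁, Submodule.add_mem _ hs₀ ht₀, Submodule.add_mem _ hs₁ ht₁,
        by rw [mul_add]; abel⟩
  -- surjectivity
  have hsurj : Function.Surjective psi := by
    intro g
    have hGprop := mem_evenCliffordRightEnd.mp g.2
    set a : CliffordAlgebra Q := (g : Module.End K (CliffordAlgebra Q)) 1 with hadef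
    set bb : CliffordAlgebra Q := (g : Module.End K (CliffordAlgebra Q)) uc with hbbdef
    set cc : CliffordAlgebra Q := (Q (f j0))⁻¹ • (bb * uc) with hccdef
    set x : CliffordAlgebra Q := ⅟(2 : K) • (a + cc) with hxdef
    set y : CliffordAlgebra Q := (⅟(2 : K) * Δ⁻¹) • ((a - cc) * ω) with hydef
    have hyω : y * ω = ⅟(2 : K) • (a - cc) := by
      rw [hydef, smul_mul_assoc, mul_assoc, hωsq, mul_smul_comm, mul_one, smul_smul,
        mul_assoc, inv_mul_cancel₀ hΔ0, mul_one]
    have hxpy : x + y * ω = a := by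
      rw [hyω, hxdef, ← smul_add]
      have h2a : (a + cc) + (a - cc) = (2 : K) • a := by rw [two_smul]; abel
      rw [h2a, smul_smul, invOf_mul_self, one_smul]
    have hxmy : (x - y * ω) * uc = bb := by
      have h1 : x - y * ω = cc := by
        rw [hyω, hxdef, ← smul_sub]
        have h2c : (a + cc) - (a - cc) = (2 : K) • cc := by rw [two_smul]; abel
        rw [h2c, smul_smul, invOf_mul_self, one_smul]
      rw [h1, hccdef, smul_mul_assoc, mul_assoc, huc, Algebra.algebraMap_eq_smul_one,
        mul_smul_comm, mul_one, smul_smul, inv_mul_cancel₀ hQu, one_smul]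
    refine ⟨x ⊗ₜ[K] 1 + y ⊗ₜ[K] rt, ?_⟩
    apply Subtype.ext
    apply LinearMap.ext
    intro z
    rw [happly x y z]
    obtain ⟨s₀, s₁, hs₀, hs₁, rfl⟩ := Hdec z
    have hsω0 : s₀ * ω = ω * s₀ := (hωeven s₀ hs₀).symm
    have hsω1 : s₁ * ω = ω * s₁ := (hωeven s₁ hs₁).symm
    have hg0 : (g : Module.End K (CliffordAlgebra Q)) s₀ = a * s₀ := by
      have h := hGprop 1 s₀ ((hmemiff s₀).mpr hs₀)
      rw [one_mul] at h
      rw [h, hadef]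
    have hg1 : (g : Module.End K (CliffordAlgebra Q)) (uc * s₁) = bb * s₁ := by
      have h := hGprop uc s₁ ((hmemiff s₁).mpr hs₁)
      rw [h, hbbdef]
    have hstep1 : (uc * s₁) * ω = -(ω * (uc * s₁)) := by
      rw [mul_assoc, hsω1, ← mul_assoc, hucω, neg_mul, mul_assoc]
    rw [map_add, hg0, hg1]
    calc x * (s₀ + uc * s₁) + y * ((s₀ + uc * s₁) * ω)
        = x * s₀ + x * (uc * s₁) + (y * (s₀ * ω) + y * ((uc * s₁) * ω)) := by
          rw [mul_add x, add_mul, mul_add y]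
      _ = x * s₀ + x * (uc * s₁) + ((y * ω) * s₀ - (y * ω) * (uc * s₁)) := by
          rw [hsω0, hstep1, mul_neg, ← mul_assoc y ω s₀, ← mul_assoc y ω (uc * s₁), ← sub_eq_add_neg]
      _ = (x + y * ω) * s₀ + (x - y * ω) * (uc * s₁) := by
          rw [add_mul, sub_mul]; abel
      _ = a * s₀ + bb * s₁ := by rw [hxpy, ← mul_assoc, hxmy]
  -- conclusion
  refine ⟨AlgEquiv.ofBijective psi ⟨hinj, hsurj⟩, ?_⟩
  intro v z
  have e0 : (AlgEquiv.ofBijective psi ⟨hinj, hsurj⟩) (CliffordAlgebra.ι Q v ⊗ₜ[K] 1)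
      = lamS (CliffordAlgebra.ι Q v) := by
    show psi (CliffordAlgebra.ι Q v ⊗ₜ[K] 1) = _
    exact hpsi1 _
  rw [e0, hlamS_coe]
end

section
/- Let a₁, …, a₆ be nonzero real numbers with a₁a₂a₃a₄a₅a₆ < 0. Then the ℝ-algebra (−a₁a₂, −a₁a₃)_ℝ ⊗_ℝ (a₁a₂a₃a₄, a₁a₂a₃a₅)_ℝ is isomorphic to the matrix algebra M₄(ℝ) if and only if exactly three of a₁, …, a₆ are negative; otherwise (i.e., if exactly one or exactly five of them are negative) it is isomorphic to M₂(ℍ), where ℍ = (−1,−1)_ℝ is the Hamilton quaternions, and in particular its Brauer class in Br(ℝ) ≅ ℤ/2ℤ is nontrivial. -/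
open scoped Quaternion TensorProduct
open Quaternion Matrix

namespace BiquatAux

noncomputable section


lemma mul_neg_iff' {x y : ℝ} (hx : x ≠ 0) (hy : y ≠ 0) :
    x * y < 0 ↔ ¬ (x < 0 ↔ y < 0) := by
  rcases hx.lt_or_gt with h | h <;> rcases hy.lt_or_gt with h' | h'
  · exact iff_of_false (by nlinarith) (fun H => H (iff_of_true h h'))
  · exact iff_of_true (mul_neg_of_neg_of_pos h h')
      (fun H => absurd (H.mp h) (not_lt.2 h'.le))
  · exact iff_of_true (mul_neg_of_pos_of_neg h h')
      (fun H => absurd (H.mpr h') (not_lt.2 h.le))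
  · exact iff_of_false (by nlinarith)
      (fun H => H (iff_of_false (not_lt.2 h.le) (not_lt.2 h'.le)))

lemma mul_pos_iff' {x y : ℝ} (hx : x ≠ 0) (hy : y ≠ 0) :
    0 < x * y ↔ (x < 0 ↔ y < 0) := by
  rcases hx.lt_or_gt with h | h <;> rcases hy.lt_or_gt with h' | h'
  · exact iff_of_true (mul_pos_of_neg_of_neg h h') (iff_of_true h h')
  · exact iff_of_false (by nlinarith [mul_neg_of_neg_of_pos h h'])
      (fun H => absurd (H.mp h) (not_lt.2 h'.le))
  · exact iff_of_false (by nlinarith [mul_neg_of_pos_of_neg h h'])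
      (fun H => absurd (H.mpr h') (not_lt.2 h.le))
  · exact iff_of_true (mul_pos h h') (iff_of_false (not_lt.2 h.le) (not_lt.2 h'.le))

set_option maxHeartbeats 1000000 in
lemma signs_main (a : Fin 6 → ℝ) (ha : ∀ i, a i ≠ 0)
    (hprod : a 0 * a 1 * a 2 * a 3 * a 4 * a 5 < 0) :
    (((Finset.univ.filter fun i => a i < 0).card = 3) ↔
      ((0 < a 0 * a 1 ∧ 0 < a 0 * a 2) ↔
        ((a 0 * a 1 * a 2 * a 3) < 0 ∧ (a 0 * a 1 * a 2 * a 4) < 0))) ∧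
    ((Finset.univ.filter fun i => a i < 0).card = 1 ∨
     (Finset.univ.filter fun i => a i < 0).card = 3 ∨
     (Finset.univ.filter fun i => a i < 0).card = 5) := by
  have n2 : a 0 * a 1 ≠ 0 := mul_ne_zero (ha 0) (ha 1)
  have n3 : a 0 * a 1 * a 2 ≠ 0 := mul_ne_zero n2 (ha 2)
  have n4 : a 0 * a 1 * a 2 * a 3 ≠ 0 := mul_ne_zero n3 (ha 3)
  have n5 : a 0 * a 1 * a 2 * a 3 * a 4 ≠ 0 := mul_ne_zero n4 (ha 4)
  rw [Finset.card_filter, Fin.sum_univ_six]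
  rw [mul_neg_iff' n5 (ha 5), mul_neg_iff' n4 (ha 4), mul_neg_iff' n3 (ha 3),
    mul_neg_iff' n2 (ha 2), mul_neg_iff' (ha 0) (ha 1)] at hprod
  rw [mul_neg_iff' n3 (ha 3), mul_neg_iff' n3 (ha 4), mul_neg_iff' n2 (ha 2),
    mul_neg_iff' (ha 0) (ha 1), mul_pos_iff' (ha 0) (ha 1), mul_pos_iff' (ha 0) (ha 2)]
  by_cases h0 : a 0 < 0 <;> by_cases h1 : a 1 < 0 <;> by_cases h2 : a 2 < 0 <;>
    by_cases h3 : a 3 < 0 <;> by_cases h4 : a 4 < 0 <;> by_cases h5 : a 5 < 0 <;>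
    first
      | (norm_num [h0, h1, h2, h3, h4, h5] at hprod ⊢)
      | (norm_num [h0, h1, h2, h3, h4, h5] at hprod)



/-- Generic: a surjective quaternion-basis lift between 4-dim algebras is an iso. -/
noncomputable def equivOfBasisSurj {A : Type*} [Ring A] [Algebra ℝ A] [FiniteDimensional ℝ A]
    (hdim : Module.finrank ℝ A = 4) {c₁ c₂ : ℝ} (B : QuaternionAlgebra.Basis A c₁ 0 c₂)
    (hs : Function.Surjective B.liftHom) : ℍ[ℝ,c₁,c₂] ≃ₐ[ℝ] A :=
  AlgEquiv.ofBijective B.liftHom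
    ⟨(LinearMap.injective_iff_surjective_of_finrank_eq_finrank
        (V := ℍ[ℝ,c₁,c₂]) (f := B.liftHom.toLinearMap)
        (by rw [QuaternionAlgebra.finrank_eq_four, hdim])).mpr hs, hs⟩

/-- Basis for M₂(ℝ) realizing `(u,v)` when `u > 0`. -/
noncomputable def splitBasis (u v : ℝ) (hu : 0 < u) :
    QuaternionAlgebra.Basis (Matrix (Fin 2) (Fin 2) ℝ) u 0 v where
  i := !![Real.sqrt u, 0; 0, -Real.sqrt u]
  j := !![0, v; 1, 0]
  k := !![0, Real.sqrt u * v; -Real.sqrt u, 0]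
  i_mul_i := by
    ext i j
    fin_cases i <;> fin_cases j <;>
      simp [Matrix.mul_apply, Fin.sum_univ_two, Real.mul_self_sqrt hu.le, mul_comm]
  j_mul_j := by
    ext i j
    fin_cases i <;> fin_cases j <;> simp [Matrix.mul_apply, Fin.sum_univ_two, mul_comm]
  i_mul_j := by
    ext i j
    fin_cases i <;> fin_cases j <;> simp [Matrix.mul_apply, Fin.sum_univ_two, mul_comm]
  j_mul_i := by
    ext i j
    fin_cases i <;> fin_cases j <;> simp [Matrix.mul_apply, Fin.sum_univ_two, mul_comm]

noncomputable def splitEquivPos (u v : ℝ) (hu : 0 < u) (hv : v ≠ 0) :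
    ℍ[ℝ,u,v] ≃ₐ[ℝ] Matrix (Fin 2) (Fin 2) ℝ := by
  refine equivOfBasisSurj (by simp [Module.finrank_matrix]) (splitBasis u v hu) ?_
  have hs : Real.sqrt u ≠ 0 := by positivity
  intro M
  refine ⟨⟨(M 0 0 + M 1 1)/2, (M 0 0 - M 1 1)/(2*Real.sqrt u),
    (M 0 1/v + M 1 0)/2, (M 0 1/v - M 1 0)/(2*Real.sqrt u)⟩, ?_⟩
  ext i j
  fin_cases i <;> fin_cases j <;>
    · simp [QuaternionAlgebra.Basis.liftHom_apply, QuaternionAlgebra.Basis.lift, splitBasis,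
        Algebra.algebraMap_eq_smul_one, Matrix.one_apply]
      field_simp
      ring

/-- The swap isomorphism ℍ[ℝ,u,v] ≃ ℍ[ℝ,v,u]. -/
noncomputable def swapEquiv (u v : ℝ) : ℍ[ℝ,v,u] ≃ₐ[ℝ] ℍ[ℝ,u,v] := by
  refine equivOfBasisSurj (by simp [QuaternionAlgebra.finrank_eq_four])
    (⟨⟨0,0,1,0⟩, ⟨0,1,0,0⟩, ⟨0,0,0,-1⟩, ?_, ?_, ?_, ?_⟩ :
      QuaternionAlgebra.Basis ℍ[ℝ,u,v] v 0 u) ?_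
  · ext <;> simp
  · ext <;> simp
  · ext <;> simp
  · ext <;> simp
  · intro x
    refine ⟨⟨x.re, x.imJ, x.imI, -x.imK⟩, ?_⟩
    ext <;> simp [QuaternionAlgebra.Basis.liftHom_apply, QuaternionAlgebra.Basis.lift]

def qmk (a b c d : ℝ) : ℍ[ℝ] := ⟨a, b, c, d⟩
@[simp] lemma qmk_re (a b c d : ℝ) : (qmk a b c d).re = a := rfl
@[simp] lemma qmk_imI (a b c d : ℝ) : (qmk a b c d).imI = b := rfl
@[simp] lemma qmk_imJ (a b c d : ℝ) : (qmk a b c d).imJ = c := rfl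
@[simp] lemma qmk_imK (a b c d : ℝ) : (qmk a b c d).imK = d := rfl

/-- ℍ[ℝ,u,v] for u,v < 0 is Hamilton's quaternions. -/
noncomputable def negEquiv (u v : ℝ) (hu : u < 0) (hv : v < 0) :
    ℍ[ℝ,u,v] ≃ₐ[ℝ] ℍ[ℝ] := by
  have hu' : Real.sqrt (-u) ≠ 0 := (Real.sqrt_pos.mpr (by linarith)).ne'
  have hv' : Real.sqrt (-v) ≠ 0 := (Real.sqrt_pos.mpr (by linarith)).ne'
  have hu2 : Real.sqrt (-u) * Real.sqrt (-u) = -u := Real.mul_self_sqrt (by linarith)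
  have hv2 : Real.sqrt (-v) * Real.sqrt (-v) = -v := Real.mul_self_sqrt (by linarith)
  refine equivOfBasisSurj (by simp [Quaternion.finrank_eq_four])
    (⟨qmk 0 (Real.sqrt (-u)) 0 0, qmk 0 0 (Real.sqrt (-v)) 0,
      qmk 0 0 0 (Real.sqrt (-u) * Real.sqrt (-v)), ?_, ?_, ?_, ?_⟩ :
      QuaternionAlgebra.Basis ℍ[ℝ] u 0 v) ?_
  · ext <;> simp [hu2] <;> ring
  · ext <;> simp [hv2] <;> ring
  · ext <;> simp
  · ext <;> simp [mul_comm]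
  · intro x
    refine ⟨⟨x.re, x.imI / Real.sqrt (-u), x.imJ / Real.sqrt (-v),
      x.imK / (Real.sqrt (-u) * Real.sqrt (-v))⟩, ?_⟩
    ext <;> simp [QuaternionAlgebra.Basis.liftHom_apply, QuaternionAlgebra.Basis.lift] <;>
      field_simp




def rmulStar : ℍ[ℝ] →ₐ[ℝ] Module.End ℝ ℍ[ℝ] where
  toFun y := LinearMap.mulRight ℝ (star y)
  map_one' := by ext z : 1; simp
  map_mul' x y := by ext z : 1; simp [mul_assoc]
  map_zero' := by ext z : 1; simp
  map_add' x y := by ext z : 1; simp [mul_add]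
  commutes' r := by
    ext z : 1
    simp [Module.algebraMap_end_apply, Algebra.algebraMap_eq_smul_one, mul_smul_comm]

def hhHom : (ℍ[ℝ] ⊗[ℝ] ℍ[ℝ]) →ₐ[ℝ] Module.End ℝ ℍ[ℝ] :=
  Algebra.TensorProduct.lift (Algebra.lmul ℝ ℍ[ℝ]) rmulStar
    (fun x y => by
      ext z : 1
      simp [rmulStar, Module.End.mul_apply, mul_assoc])

def eq4 : Fin 4 → ℍ[ℝ] := ![qmk 1 0 0 0, qmk 0 1 0 0, qmk 0 0 1 0, qmk 0 0 0 1]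

set_option maxHeartbeats 2000000 in
lemma hhHom_surjective : Function.Surjective hhHom := by
  have hli : LinearIndependent ℝ (fun p : Fin 4 × Fin 4 => hhHom (eq4 p.1 ⊗ₜ[ℝ] eq4 p.2)) := by
    rw [Fintype.linearIndependent_iff]
    intro g hg
    have H : ∀ c : Fin 4, (∑ p : Fin 4 × Fin 4, g p • hhHom (eq4 p.1 ⊗ₜ[ℝ] eq4 p.2)) (eq4 c) = 0 := by
      intro c; rw [hg]; rfl
    have key : ∀ c : Fin 4, ∑ p : Fin 4 × Fin 4, g p • (eq4 p.1 * (eq4 c * star (eq4 p.2))) = 0 := by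
      intro c
      have := H c
      simpa [hhHom, Algebra.TensorProduct.lift_tmul, LinearMap.sum_apply, rmulStar] using this
    have h0 := key 0
    have h1 := key 1
    have h2 := key 2
    have h3 := key 3
    simp only [Fintype.sum_prod_type, Fin.sum_univ_four, eq4, Matrix.cons_val_zero,
      Matrix.cons_val_one, Matrix.head_cons, Matrix.cons_val_two, Matrix.tail_cons,
      Matrix.cons_val_three] at h0 h1 h2 h3
    rw [Quaternion.ext_iff] at h0 h1 h2 h3
    obtain ⟨a0, a1, a2, a3⟩ := h0
    obtain ⟨b0, b1, b2, b3⟩ := h1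
    obtain ⟨c0, c1, c2, c3⟩ := h2
    obtain ⟨d0, d1, d2, d3⟩ := h3
    simp only [Quaternion.re_mul, Quaternion.imI_mul, Quaternion.imJ_mul, Quaternion.imK_mul,
      Quaternion.re_star, Quaternion.imI_star, Quaternion.imJ_star, Quaternion.imK_star,
      Quaternion.re_smul, Quaternion.imI_smul, Quaternion.imJ_smul,
      Quaternion.imK_smul, Quaternion.re_add, Quaternion.imI_add,
      Quaternion.imJ_add, Quaternion.imK_add, Quaternion.re_zero,
      Quaternion.imI_zero, Quaternion.imJ_zero, Quaternion.imK_zero,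
      smul_eq_mul] at a0 a1 a2 a3 b0 b1 b2 b3 c0 c1 c2 c3 d0 d1 d2 d3
    norm_num at a0 a1 a2 a3 b0 b1 b2 b3 c0 c1 c2 c3 d0 d1 d2 d3
    intro p
    fin_cases p <;> simp <;> linarith
  have hcard : Fintype.card (Fin 4 × Fin 4) = Module.finrank ℝ (Module.End ℝ ℍ[ℝ]) := by
    simp [Module.finrank_linearMap, Quaternion.finrank_eq_four]
  have hspan := (basisOfLinearIndependentOfCardEqFinrank hli hcard).span_eq
  rw [coe_basisOfLinearIndependentOfCardEqFinrank] at hspan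
  have hrange : LinearMap.range hhHom.toLinearMap = ⊤ := by
    apply top_unique
    rw [← hspan]
    refine Submodule.span_le.2 ?_
    rintro _ ⟨q, rfl⟩
    exact ⟨eq4 q.1 ⊗ₜ eq4 q.2, rfl⟩
  intro y
  obtain ⟨x, hx⟩ := (LinearMap.range_eq_top.mp hrange) y
  exact ⟨x, hx⟩

/-- ℍ ⊗ ℍ ≃ M₄(ℝ) -/
def hhEquivMatrix : (ℍ[ℝ] ⊗[ℝ] ℍ[ℝ]) ≃ₐ[ℝ] Matrix (Fin 4) (Fin 4) ℝ :=
  (AlgEquiv.ofBijective hhHom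
    ⟨(LinearMap.injective_iff_surjective_of_finrank_eq_finrank
        (by simp [Module.finrank_tensorProduct, Module.finrank_linearMap,
          Quaternion.finrank_eq_four])).mpr hhHom_surjective, hhHom_surjective⟩).trans
    (algEquivMatrix (QuaternionAlgebra.basisOneIJK (-1 : ℝ) (0 : ℝ) (-1 : ℝ)))

/-- X ⊗ M₂(ℝ) ≃ M₂(X) -/
def tensorMatrixRight (X : Type*) [Ring X] [Algebra ℝ X] :
    (X ⊗[ℝ] Matrix (Fin 2) (Fin 2) ℝ) ≃ₐ[ℝ] Matrix (Fin 2) (Fin 2) X :=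
  (matrixEquivTensor (Fin 2) ℝ X).symm

/-- M₂(ℝ) ⊗ X ≃ M₂(X) -/
def tensorMatrixLeft (X : Type*) [Ring X] [Algebra ℝ X] :
    (Matrix (Fin 2) (Fin 2) ℝ ⊗[ℝ] X) ≃ₐ[ℝ] Matrix (Fin 2) (Fin 2) X :=
  (Algebra.TensorProduct.comm ℝ _ _).trans (tensorMatrixRight X)

/-- M₂(ℝ) ⊗ M₂(ℝ) ≃ M₄(ℝ) -/
def m2m2Equiv : (Matrix (Fin 2) (Fin 2) ℝ ⊗[ℝ] Matrix (Fin 2) (Fin 2) ℝ) ≃ₐ[ℝ]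
    Matrix (Fin 4) (Fin 4) ℝ :=
  (tensorMatrixLeft _).trans <|
    (Matrix.compAlgEquiv (Fin 2) (Fin 2) ℝ ℝ).trans
      (Matrix.reindexAlgEquiv ℝ ℝ (finProdFinEquiv.trans (finCongr (by norm_num))))

lemma no_iso : IsEmpty ((Matrix (Fin 4) (Fin 4) ℝ) ≃ₐ[ℝ] Matrix (Fin 2) (Fin 2) ℍ[ℝ]) := by
  constructor
  intro φ
  set p : Fin 4 → Matrix (Fin 2) (Fin 2) ℍ[ℝ] := fun i => φ (Matrix.single i i 1) with hp
  have horth : ∀ i j : Fin 4, i ≠ j → p i * p j = 0 := by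
    intro i j hij
    rw [hp]
    dsimp only
    have h0 : Matrix.single i i (1:ℝ) * Matrix.single j j (1:ℝ) = 0 :=
      Matrix.single_mul_single_of_ne (c := (1:ℝ)) i i j hij (1:ℝ)
    rw [← _root_.map_mul, h0, map_zero]
  have hidem : ∀ i, p i * p i = p i := by
    intro i
    rw [hp]
    dsimp only
    have h0 : Matrix.single i i (1:ℝ) * Matrix.single i i (1:ℝ)
        = Matrix.single i i (1:ℝ) := by
      rw [Matrix.single_mul_single_same, one_mul]
    rw [← _root_.map_mul, h0]
  have hne : ∀ i, p i ≠ 0 := by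
    intro i h
    have h2 : Matrix.single i i (1 : ℝ) = 0 := by
      apply φ.injective
      rw [map_zero]
      exact h
    have := congrFun (congrFun h2 i) i
    simp [Matrix.single] at this
  have hv : ∀ i, ∃ v : Fin 2 → ℍ[ℝ], (p i).mulVec v ≠ 0 := by
    intro i
    by_contra h
    push_neg at h
    apply hne i
    refine Matrix.ext fun k l => ?_
    have := congrFun (h (Pi.single l 1)) k
    simpa [Matrix.mulVec_single] using this
  choose v hv using hv
  set w : Fin 4 → (Fin 2 → ℍ[ℝ]) := fun i => (p i).mulVec (v i) with hw
  have hkey : ∀ i j : Fin 4, (p j).mulVec (w i) = if i = j then w j else 0 := by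
    intro i j
    rw [hw]
    dsimp only
    rw [Matrix.mulVec_mulVec]
    by_cases h : i = j
    · subst h
      rw [if_pos rfl, hidem]
    · rw [if_neg h, horth _ _ (Ne.symm h), Matrix.zero_mulVec]
  have hmul : ∀ (M : Matrix (Fin 2) (Fin 2) ℍ[ℝ]) (u : Fin 2 → ℍ[ℝ]) (c : ℍ[ℝ]),
      M.mulVec (fun l => u l * c) = fun k => (M.mulVec u) k * c := by
    intro M u c
    funext k
    simp [Matrix.mulVec, dotProduct, Fin.sum_univ_two, add_mul, mul_assoc]
  let F : (Fin 4 → ℍ[ℝ]) →ₗ[ℝ] (Fin 2 → ℍ[ℝ]) :=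
    { toFun := fun q l => ∑ i, w i l * q i
      map_add' := by
        intro x y
        funext l
        simp [mul_add, Finset.sum_add_distrib]
      map_smul' := by
        intro r x
        funext l
        simp [mul_smul_comm, Finset.smul_sum] }
  have hFinj : Function.Injective F := by
    intro q q' hqq
    have hzero : ∀ q : Fin 4 → ℍ[ℝ], F q = 0 → q = 0 := by
      intro q hq
      funext j
      have h1 : (p j).mulVec (fun l => ∑ i, w i l * q i) = 0 := by
        have : (fun l => ∑ i, w i l * q i) = (0 : Fin 2 → ℍ[ℝ]) := hq
        rw [this, Matrix.mulVec_zero]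
      have h2 : (p j).mulVec (fun l => ∑ i, w i l * q i) = fun l => w j l * q j := by
        have hsum : (fun l => ∑ i, w i l * q i) = ∑ i, (fun l => w i l * q i) := by
          funext l
          simp
        rw [hsum]
        have hmv_sum : ∀ (M : Matrix (Fin 2) (Fin 2) ℍ[ℝ]) (f : Fin 4 → Fin 2 → ℍ[ℝ]),
            M.mulVec (∑ i, f i) = ∑ i, M.mulVec (f i) := by
          intro M f
          funext l
          simp only [Matrix.mulVec, dotProduct, Finset.sum_apply, Finset.mul_sum]
          exact Finset.sum_comm
        rw [hmv_sum]
        funext l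
        rw [Finset.sum_apply]
        have : ∀ i : Fin 4, ((p j).mulVec fun l => w i l * q i) l
            = (if i = j then w j l else 0) * q i := by
          intro i
          rw [hmul, hkey]
          by_cases h : i = j <;> simp [h]
        simp only [this]
        rw [Finset.sum_eq_single j]
        · simp
        · intro b _ hb
          simp [hb]
        · simp
      rw [h2] at h1
      obtain ⟨l, hl⟩ := Function.ne_iff.mp (hv j)
      have := congrFun h1 l
      simp only [Pi.zero_apply] at this
      rcases mul_eq_zero.mp this with h | h
      · exact absurd h hl
      · exact h
    have := hzero (q - q') (by rw [map_sub, hqq, sub_self])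
    rwa [sub_eq_zero] at this
  have hle := LinearMap.finrank_le_finrank_of_injective hFinj
  rw [Module.finrank_pi_fintype, Module.finrank_pi_fintype] at hle
  simp [Quaternion.finrank_eq_four] at hle


/-- negative definite case packaged -/
lemma quatH (u v : ℝ) (hu : u < 0) (hv : v < 0) : Nonempty (ℍ[ℝ,u,v] ≃ₐ[ℝ] ℍ[ℝ]) :=
  ⟨negEquiv u v hu hv⟩

/-- split case packaged -/
lemma quatM (u v : ℝ) (hu : u ≠ 0) (hv : v ≠ 0) (h : ¬(u < 0 ∧ v < 0)) :
    Nonempty (ℍ[ℝ,u,v] ≃ₐ[ℝ] Matrix (Fin 2) (Fin 2) ℝ) := by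
  rcases hu.lt_or_gt with h1 | h1
  · rcases hv.lt_or_gt with h2 | h2
    · exact absurd ⟨h1, h2⟩ h
    · exact ⟨(swapEquiv u v).symm.trans (splitEquivPos v u h2 hu)⟩
  · exact ⟨splitEquivPos u v h1 hv⟩

end

end BiquatAux

open BiquatAux

/-- Let `a₁, …, a₆` be nonzero reals with `a₁⋯a₆ < 0`.  The real
algebra `(−a₁a₂, −a₁a₃)_ℝ ⊗ (a₁a₂a₃a₄, a₁a₂a₃a₅)_ℝ` is isomorphic to `M₄(ℝ)` if and only
if exactly three of the `aᵢ` are negative; and if exactly one or exactly five of them are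
negative, it is isomorphic to `M₂(ℍ)`. -/
theorem real_biquaternion_signature (a : Fin 6 → ℝ) (ha : ∀ i, a i ≠ 0)
    (hprod : a 0 * a 1 * a 2 * a 3 * a 4 * a 5 < 0) :
    (Nonempty
        ((ℍ[ℝ, -(a 0 * a 1), -(a 0 * a 2)] ⊗[ℝ]
            ℍ[ℝ, a 0 * a 1 * a 2 * a 3, a 0 * a 1 * a 2 * a 4]) ≃ₐ[ℝ]
          Matrix (Fin 4) (Fin 4) ℝ) ↔
        (Finset.univ.filter fun i => a i < 0).card = 3) ∧
      ((Finset.univ.filter fun i => a i < 0).card = 1 ∨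
          (Finset.univ.filter fun i => a i < 0).card = 5 →
        Nonempty
          ((ℍ[ℝ, -(a 0 * a 1), -(a 0 * a 2)] ⊗[ℝ]
              ℍ[ℝ, a 0 * a 1 * a 2 * a 3, a 0 * a 1 * a 2 * a 4]) ≃ₐ[ℝ]
            Matrix (Fin 2) (Fin 2) ℍ[ℝ])) := by
  obtain ⟨hiff, hodd⟩ := signs_main a ha hprod
  have hu1 : -(a 0 * a 1) ≠ 0 := neg_ne_zero.2 (mul_ne_zero (ha 0) (ha 1))
  have hu2 : -(a 0 * a 2) ≠ 0 := neg_ne_zero.2 (mul_ne_zero (ha 0) (ha 2))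
  have hc1 : a 0 * a 1 * a 2 * a 3 ≠ 0 :=
    mul_ne_zero (mul_ne_zero (mul_ne_zero (ha 0) (ha 1)) (ha 2)) (ha 3)
  have hc2 : a 0 * a 1 * a 2 * a 4 ≠ 0 :=
    mul_ne_zero (mul_ne_zero (mul_ne_zero (ha 0) (ha 1)) (ha 2)) (ha 4)
  have mkM4 : ((0 < a 0 * a 1 ∧ 0 < a 0 * a 2) ↔
      (a 0 * a 1 * a 2 * a 3 < 0 ∧ a 0 * a 1 * a 2 * a 4 < 0)) →
      Nonempty ((ℍ[ℝ, -(a 0 * a 1), -(a 0 * a 2)] ⊗[ℝ]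
          ℍ[ℝ, a 0 * a 1 * a 2 * a 3, a 0 * a 1 * a 2 * a 4]) ≃ₐ[ℝ]
        Matrix (Fin 4) (Fin 4) ℝ) := by
    intro hPQ
    by_cases hP : 0 < a 0 * a 1 ∧ 0 < a 0 * a 2
    · obtain ⟨hQ1, hQ2⟩ := hPQ.mp hP
      obtain ⟨e1⟩ := quatH _ _ (by linarith [hP.1] : -(a 0 * a 1) < 0)
        (by linarith [hP.2] : -(a 0 * a 2) < 0)
      obtain ⟨e2⟩ := quatH _ _ hQ1 hQ2
      exact ⟨(Algebra.TensorProduct.congr e1 e2).trans hhEquivMatrix⟩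
    · obtain ⟨e1⟩ := quatM _ _ hu1 hu2 (fun h => hP ⟨by linarith [h.1], by linarith [h.2]⟩)
      obtain ⟨e2⟩ := quatM _ _ hc1 hc2 (fun h => hP (hPQ.mpr h))
      exact ⟨(Algebra.TensorProduct.congr e1 e2).trans m2m2Equiv⟩
  have mkM2H : (¬ ((0 < a 0 * a 1 ∧ 0 < a 0 * a 2) ↔
      (a 0 * a 1 * a 2 * a 3 < 0 ∧ a 0 * a 1 * a 2 * a 4 < 0))) →
      Nonempty ((ℍ[ℝ, -(a 0 * a 1), -(a 0 * a 2)] ⊗[ℝ]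
          ℍ[ℝ, a 0 * a 1 * a 2 * a 3, a 0 * a 1 * a 2 * a 4]) ≃ₐ[ℝ]
        Matrix (Fin 2) (Fin 2) ℍ[ℝ]) := by
    intro hPQ
    by_cases hP : 0 < a 0 * a 1 ∧ 0 < a 0 * a 2
    · obtain ⟨e1⟩ := quatH _ _ (by linarith [hP.1] : -(a 0 * a 1) < 0)
        (by linarith [hP.2] : -(a 0 * a 2) < 0)
      obtain ⟨e2⟩ := quatM _ _ hc1 hc2 (fun h => hPQ ⟨fun _ => h, fun _ => hP⟩)
      exact ⟨(Algebra.TensorProduct.congr e1 e2).trans (tensorMatrixRight ℍ[ℝ])⟩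
    · have hQ : a 0 * a 1 * a 2 * a 3 < 0 ∧ a 0 * a 1 * a 2 * a 4 < 0 := by
        by_contra h
        exact hPQ (iff_of_false hP h)
      obtain ⟨e1⟩ := quatM _ _ hu1 hu2 (fun h => hP ⟨by linarith [h.1], by linarith [h.2]⟩)
      obtain ⟨e2⟩ := quatH _ _ hQ.1 hQ.2
      exact ⟨(Algebra.TensorProduct.congr e1 e2).trans (tensorMatrixLeft ℍ[ℝ])⟩
  constructor
  · constructor
    · intro hM4
      by_contra hN3
      obtain ⟨e⟩ := mkM2H (fun h => hN3 (hiff.mpr h))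
      obtain ⟨f⟩ := hM4
      exact no_iso.false (f.symm.trans e)
    · intro h3
      exact mkM4 (hiff.mp h3)
  · intro h15
    have hne3 : (Finset.univ.filter fun i => a i < 0).card ≠ 3 := by
      rcases h15 with h | h <;> omega
    exact mkM2H (fun h => hne3 (hiff.mpr h))
end

section
/- Let A: [0,1] → M₆(ℝ) be a continuous map such that A(t) is a symmetric matrix for every t ∈ [0,1]. Suppose that the set T = {t ∈ [0,1] : det A(t) = 0} is finite and that for every t ∈ T the kernel of A(t) is one-dimensional. If A(0) has exactly one negative eigenvalue (counted with multiplicity) and A(1) has exactly five negative eigenvalues, then there exists t ∈ [0,1] such that A(t) is invertible with exactly three negative and three positive eigenvalues, i.e., A(t) has signature (3,3). -/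
open Matrix Finset Module Submodule

noncomputable section

namespace SigAux

abbrev E6 := EuclideanSpace ℝ (Fin 6)

/-- quadratic form of a matrix -/
def quad (M : Matrix (Fin 6) (Fin 6) ℝ) (x : E6) : ℝ :=
  inner ℝ x (Matrix.toEuclideanLin M x)

lemma quad_eq_sum_mul (M : Matrix (Fin 6) (Fin 6) ℝ) (x : E6) :
    quad M x = ∑ i, x i * (M.mulVec (x : Fin 6 → ℝ)) i := by
  simp [quad, toEuclideanLin_apply, PiLp.inner_apply, RCLike.inner_apply]
  exact Finset.sum_congr rfl fun i _ => mul_comm _ _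

lemma continuous_quad : Continuous
    (fun p : Matrix (Fin 6) (Fin 6) ℝ × E6 => quad p.1 p.2) := by
  have hc : ∀ i, Continuous fun p : Matrix (Fin 6) (Fin 6) ℝ × E6 => p.2 i :=
    fun i => (EuclideanSpace.proj i).continuous.comp continuous_snd
  simp only [quad_eq_sum_mul, Matrix.mulVec, dotProduct]
  refine continuous_finset_sum _ fun i _ => (hc i).mul (continuous_finset_sum _ fun j _ => ?_)
  exact Continuous.mul (by fun_prop) (hc j)

lemma quad_smul (M : Matrix (Fin 6) (Fin 6) ℝ) (c : ℝ) (x : E6) :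
    quad M (c • x) = c^2 * quad M x := by
  simp only [quad, real_inner_smul_left, _root_.map_smul, real_inner_smul_right,
    Finset.mul_sum, PiLp.inner_apply, RCLike.inner_apply, PiLp.smul_apply, smul_eq_mul,
    starRingEnd_apply, star_trivial]
  exact Finset.sum_congr rfl fun i _ => by ring


variable {M : Matrix (Fin 6) (Fin 6) ℝ} (hM : M.IsHermitian)

lemma quad_eq_spectral (x : E6) :
    quad M x = ∑ i, hM.eigenvalues i * (hM.eigenvectorBasis.repr x i)^2 := by
  set b := hM.eigenvectorBasis with hbdef
  have hb : ∀ i, toEuclideanLin M (b i) = hM.eigenvalues i • b i := by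
    intro i
    apply (WithLp.equiv 2 (Fin 6 → ℝ)).injective
    simp only [toEuclideanLin_apply, Equiv.apply_symm_apply]
    simpa using hM.mulVec_eigenvectorBasis i
  calc quad M x = inner ℝ x (toEuclideanLin M (∑ i, b.repr x i • b i)) := by rw [b.sum_repr]; rfl
    _ = ∑ i, b.repr x i * (hM.eigenvalues i * inner ℝ x (b i)) := by
        rw [map_sum, inner_sum]
        refine Finset.sum_congr rfl fun i _ => ?_
        rw [_root_.map_smul, hb i, real_inner_smul_right, real_inner_smul_right]
    _ = _ := by
        refine Finset.sum_congr rfl fun i _ => ?_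
        rw [real_inner_comm, ← b.repr_apply_apply]
        ring

/-- span of the eigenvectors indexed by `s` -/
def eigSpan (s : Finset (Fin 6)) : Submodule ℝ E6 :=
  Submodule.span ℝ (hM.eigenvectorBasis '' (s : Set (Fin 6)))

lemma repr_eq_zero_of_mem_eigSpan {s : Finset (Fin 6)} {x : E6} (hx : x ∈ eigSpan hM s)
    {j : Fin 6} (hj : j ∉ s) : hM.eigenvectorBasis.repr x j = 0 := by
  set b := hM.eigenvectorBasis with hbdef
  induction hx using Submodule.span_induction with
  | mem y hy =>
      obtain ⟨i, hi, rfl⟩ := hy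
      have hij : j ≠ i := fun h => hj (h ▸ hi)
      simp [hbdef, OrthonormalBasis.repr_self, EuclideanSpace.single_apply, hij]
  | zero => simp
  | add y z _ _ hy hz => simp [map_add, hy, hz]
  | smul c y _ hy => simp [_root_.map_smul, hy]

lemma finrank_eigSpan (s : Finset (Fin 6)) : finrank ℝ (eigSpan hM s) = s.card := by
  have hli : LinearIndependent ℝ (fun i : (s : Set (Fin 6)) => hM.eigenvectorBasis i) :=
    hM.eigenvectorBasis.orthonormal.linearIndependent.comp Subtype.val Subtype.val_injective
  have : (hM.eigenvectorBasis '' (s : Set (Fin 6))) =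
      Set.range fun i : (s : Set (Fin 6)) => hM.eigenvectorBasis i := Set.image_eq_range _ _
  rw [eigSpan, this, finrank_span_eq_card hli]
  simp

lemma quad_eq_sum_of_mem_eigSpan {s : Finset (Fin 6)} {x : E6} (hx : x ∈ eigSpan hM s) :
    quad M x = ∑ i ∈ s, hM.eigenvalues i * (hM.eigenvectorBasis.repr x i)^2 := by
  rw [quad_eq_spectral hM x]
  refine (Finset.sum_subset (Finset.subset_univ s) fun i _ hi => ?_).symm
  rw [repr_eq_zero_of_mem_eigSpan hM hx hi]
  ring

lemma exists_repr_ne_zero {s : Finset (Fin 6)} {x : E6} (hx : x ∈ eigSpan hM s) (hx0 : x ≠ 0) :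
    ∃ j ∈ s, hM.eigenvectorBasis.repr x j ≠ 0 := by
  by_contra h
  push_neg at h
  apply hx0
  have : hM.eigenvectorBasis.repr x = 0 := by
    ext j
    by_cases hj : j ∈ s
    · simpa using h j hj
    · simpa using repr_eq_zero_of_mem_eigSpan hM hx hj
  simpa using hM.eigenvectorBasis.repr.injective (by simpa using this)


def negCard : ℕ := (univ.filter fun i => hM.eigenvalues i < 0).card

def posCard : ℕ := (univ.filter fun i => 0 < hM.eigenvalues i).card

lemma quad_neg_of_mem {x : E6}
    (hx : x ∈ eigSpan hM (univ.filter fun i => hM.eigenvalues i < 0)) (hx0 : x ≠ 0) :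
    quad M x < 0 := by
  rw [quad_eq_sum_of_mem_eigSpan hM hx]
  obtain ⟨j, hj, hj0⟩ := exists_repr_ne_zero hM hx hx0
  have h := Finset.sum_lt_sum (s := univ.filter fun i => hM.eigenvalues i < 0)
    (f := fun i => hM.eigenvalues i * (hM.eigenvectorBasis.repr x i)^2) (g := fun _ => (0:ℝ))
    (fun i hi => mul_nonpos_iff.2 (Or.inr ⟨le_of_lt (Finset.mem_filter.1 hi).2, sq_nonneg _⟩))
    ⟨j, hj, mul_neg_of_neg_of_pos (Finset.mem_filter.1 hj).2 (pow_two_pos_of_ne_zero hj0)⟩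
  simpa using h

lemma quad_pos_of_mem {x : E6}
    (hx : x ∈ eigSpan hM (univ.filter fun i => 0 < hM.eigenvalues i)) (hx0 : x ≠ 0) :
    0 < quad M x := by
  rw [quad_eq_sum_of_mem_eigSpan hM hx]
  obtain ⟨j, hj, hj0⟩ := exists_repr_ne_zero hM hx hx0
  have h := Finset.sum_lt_sum (s := univ.filter fun i => 0 < hM.eigenvalues i)
    (f := fun _ => (0:ℝ)) (g := fun i => hM.eigenvalues i * (hM.eigenvectorBasis.repr x i)^2)
    (fun i hi => mul_nonneg (le_of_lt (Finset.mem_filter.1 hi).2) (sq_nonneg _))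
    ⟨j, hj, mul_pos (Finset.mem_filter.1 hj).2 (pow_two_pos_of_ne_zero hj0)⟩
  simpa using h

lemma quad_nonneg_of_mem {x : E6}
    (hx : x ∈ eigSpan hM (univ.filter fun i => 0 ≤ hM.eigenvalues i)) :
    0 ≤ quad M x := by
  rw [quad_eq_sum_of_mem_eigSpan hM hx]
  exact Finset.sum_nonneg fun i hi =>
    mul_nonneg (Finset.mem_filter.1 hi).2 (sq_nonneg _)

lemma quad_nonpos_of_mem {x : E6}
    (hx : x ∈ eigSpan hM (univ.filter fun i => hM.eigenvalues i ≤ 0)) :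
    quad M x ≤ 0 := by
  rw [quad_eq_sum_of_mem_eigSpan hM hx]
  exact Finset.sum_nonpos fun i hi =>
    mul_nonpos_iff.2 (Or.inr ⟨(Finset.mem_filter.1 hi).2, sq_nonneg _⟩)

lemma finrank_E6 : finrank ℝ E6 = 6 := by simp

lemma finrank_le_negCard (W : Submodule ℝ E6) (hW : ∀ x ∈ W, x ≠ 0 → quad M x < 0) :
    finrank ℝ W ≤ negCard hM := by
  set K := eigSpan hM (univ.filter fun i => 0 ≤ hM.eigenvalues i) with hK
  have hdis : W ⊓ K = ⊥ := by
    rw [Submodule.eq_bot_iff]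
    rintro x ⟨hxW, hxK⟩
    by_contra h0
    exact absurd (quad_nonneg_of_mem hM hxK) (not_le.2 (hW x hxW h0))
  have h1 : finrank ℝ W + finrank ℝ K ≤ 6 := by
    rw [← Submodule.finrank_sup_add_finrank_inf_eq W K, hdis]
    simpa using le_trans (Submodule.finrank_le (W ⊔ K)) (le_of_eq finrank_E6)
  have h2 : finrank ℝ K = (univ.filter fun i => 0 ≤ hM.eigenvalues i).card :=
    finrank_eigSpan hM _
  have h3 : negCard hM + (univ.filter fun i => 0 ≤ hM.eigenvalues i).card = 6 := by
    have := Finset.card_filter_add_card_filter_not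
      (s := (univ : Finset (Fin 6))) (p := fun i => hM.eigenvalues i < 0)
    simpa [negCard, not_lt] using this
  omega

lemma finrank_le_posCard (W : Submodule ℝ E6) (hW : ∀ x ∈ W, x ≠ 0 → 0 < quad M x) :
    finrank ℝ W ≤ posCard hM := by
  set K := eigSpan hM (univ.filter fun i => hM.eigenvalues i ≤ 0) with hK
  have hdis : W ⊓ K = ⊥ := by
    rw [Submodule.eq_bot_iff]
    rintro x ⟨hxW, hxK⟩
    by_contra h0
    exact absurd (quad_nonpos_of_mem hM hxK) (not_le.2 (hW x hxW h0))
  have h1 : finrank ℝ W + finrank ℝ K ≤ 6 := by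
    rw [← Submodule.finrank_sup_add_finrank_inf_eq W K, hdis]
    simpa using le_trans (Submodule.finrank_le (W ⊔ K)) (le_of_eq finrank_E6)
  have h2 : finrank ℝ K = (univ.filter fun i => hM.eigenvalues i ≤ 0).card :=
    finrank_eigSpan hM _
  have h3 : posCard hM + (univ.filter fun i => hM.eigenvalues i ≤ 0).card = 6 := by
    have := Finset.card_filter_add_card_filter_not
      (s := (univ : Finset (Fin 6))) (p := fun i => 0 < hM.eigenvalues i)
    simpa [posCard, not_lt] using this
  omega


lemma eventually_forall_quad_neg (W : Submodule ℝ E6)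
    (hW : ∀ x ∈ W, x ≠ 0 → quad M x < 0) :
    ∀ᶠ M' in nhds M, ∀ x ∈ W, x ≠ 0 → quad M' x < 0 := by
  have hKc : IsCompact ((W : Set E6) ∩ Metric.sphere 0 1) :=
    (isCompact_sphere 0 1).inter_left W.closed_of_finiteDimensional
  have hP : ∀ y ∈ (W : Set E6) ∩ Metric.sphere 0 1,
      ∀ᶠ p : Matrix (Fin 6) (Fin 6) ℝ × E6 in nhds (M, y), quad p.1 p.2 < 0 := by
    intro y hy
    have hy0 : y ≠ 0 := by
      intro h
      have := hy.2
      rw [h] at this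
      simp at this
    have hopen : IsOpen {p : Matrix (Fin 6) (Fin 6) ℝ × E6 | quad p.1 p.2 < 0} :=
      isOpen_lt continuous_quad continuous_const
    exact hopen.eventually_mem (hW y hy.1 hy0)
  have h := IsCompact.eventually_forall_of_forall_eventually (x₀ := M)
    (P := fun (N : Matrix (Fin 6) (Fin 6) ℝ) (x : E6) => quad N x < 0) hKc hP
  refine h.mono fun M' hM'' x hxW hx0 => ?_
  have hn : ‖x‖ ≠ 0 := norm_ne_zero_iff.2 hx0
  have hy : (‖x‖⁻¹ • x) ∈ (W : Set E6) ∩ Metric.sphere 0 1 :=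
    ⟨W.smul_mem _ hxW, by simp [norm_smul, inv_mul_cancel₀ hn]⟩
  have h2 := hM'' _ hy
  simp only [quad_smul] at h2
  have hc : 0 < ‖x‖⁻¹ ^ 2 := by positivity
  nlinarith

lemma eventually_forall_quad_pos (W : Submodule ℝ E6)
    (hW : ∀ x ∈ W, x ≠ 0 → 0 < quad M x) :
    ∀ᶠ M' in nhds M, ∀ x ∈ W, x ≠ 0 → 0 < quad M' x := by
  have hKc : IsCompact ((W : Set E6) ∩ Metric.sphere 0 1) :=
    (isCompact_sphere 0 1).inter_left W.closed_of_finiteDimensional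
  have hP : ∀ y ∈ (W : Set E6) ∩ Metric.sphere 0 1,
      ∀ᶠ p : Matrix (Fin 6) (Fin 6) ℝ × E6 in nhds (M, y), 0 < quad p.1 p.2 := by
    intro y hy
    have hy0 : y ≠ 0 := by
      intro h
      have := hy.2
      rw [h] at this
      simp at this
    have hopen : IsOpen {p : Matrix (Fin 6) (Fin 6) ℝ × E6 | 0 < quad p.1 p.2} :=
      isOpen_lt continuous_const continuous_quad
    exact hopen.eventually_mem (hW y hy.1 hy0)
  have h := IsCompact.eventually_forall_of_forall_eventually (x₀ := M)
    (P := fun (N : Matrix (Fin 6) (Fin 6) ℝ) (x : E6) => 0 < quad N x) hKc hP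
  refine h.mono fun M' hM'' x hxW hx0 => ?_
  have hn : ‖x‖ ≠ 0 := norm_ne_zero_iff.2 hx0
  have hy : (‖x‖⁻¹ • x) ∈ (W : Set E6) ∩ Metric.sphere 0 1 :=
    ⟨W.smul_mem _ hxW, by simp [norm_smul, inv_mul_cancel₀ hn]⟩
  have h2 := hM'' _ hy
  simp only [quad_smul] at h2
  have hc : 0 < ‖x‖⁻¹ ^ 2 := by positivity
  nlinarith

lemma eventually_negCard_le :
    ∀ᶠ M' in nhds M, ∀ hM' : M'.IsHermitian, negCard hM ≤ negCard hM' := by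
  have h := eventually_forall_quad_neg
    (eigSpan hM (univ.filter fun i => hM.eigenvalues i < 0))
    (fun x hx h0 => quad_neg_of_mem hM hx h0)
  refine h.mono fun M' hM'' hM' => ?_
  have h2 := finrank_le_negCard hM' _ (fun x hx h0 => hM'' x hx h0)
  rwa [finrank_eigSpan] at h2

lemma eventually_posCard_le :
    ∀ᶠ M' in nhds M, ∀ hM' : M'.IsHermitian, posCard hM ≤ posCard hM' := by
  have h := eventually_forall_quad_pos
    (eigSpan hM (univ.filter fun i => 0 < hM.eigenvalues i))
    (fun x hx h0 => quad_pos_of_mem hM hx h0)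
  refine h.mono fun M' hM'' hM' => ?_
  have h2 := finrank_le_posCard hM' _ (fun x hx h0 => hM'' x hx h0)
  rwa [finrank_eigSpan] at h2


lemma card_filter_ne :
    (univ.filter fun i => hM.eigenvalues i ≠ 0).card = negCard hM + posCard hM := by
  have h1 : (univ.filter fun i => hM.eigenvalues i ≠ 0) =
      (univ.filter fun i => hM.eigenvalues i < 0) ∪
      (univ.filter fun i => 0 < hM.eigenvalues i) := by
    ext i
    simp only [Finset.mem_filter, Finset.mem_union, Finset.mem_univ, true_and]
    exact ne_iff_lt_or_gt
  rw [h1, Finset.card_union_of_disjoint]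
  · rfl
  · rw [Finset.disjoint_left]
    intro i hi hj
    simp only [Finset.mem_filter] at hi hj
    exact absurd (hi.2.trans hj.2) (lt_irrefl _)

lemma total_card :
    negCard hM + posCard hM + (univ.filter fun i => hM.eigenvalues i = 0).card = 6 := by
  have h3 := Finset.card_filter_add_card_filter_not
    (s := (univ : Finset (Fin 6))) (p := fun i => hM.eigenvalues i = 0)
  have h4 : (univ.filter fun i => ¬ hM.eigenvalues i = 0).card = negCard hM + posCard hM :=
    card_filter_ne hM
  simp only [Finset.card_univ, Fintype.card_fin] at h3
  omega

lemma rank_eq_add : M.rank = negCard hM + posCard hM := by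
  rw [hM.rank_eq_card_non_zero_eigs, Fintype.card_subtype, card_filter_ne hM]

lemma rank_add_ker : M.rank + finrank ℝ (LinearMap.ker M.mulVecLin) = 6 := by
  rw [Matrix.rank, LinearMap.finrank_range_add_finrank_ker]
  simp

lemma det_ne_zero_of_add_eq_six (h : negCard hM + posCard hM = 6) : M.det ≠ 0 := by
  have hr : M.rank = 6 := by rw [rank_eq_add hM]; omega
  have h6 : finrank ℝ (LinearMap.ker M.mulVecLin) = 0 := by
    have := rank_add_ker (M := M)
    omega
  have hbot : LinearMap.ker M.mulVecLin = ⊥ := Submodule.finrank_eq_zero.1 h6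
  have hinj : Function.Injective M.mulVec := LinearMap.ker_eq_bot.1 hbot
  exact isUnit_iff_ne_zero.1
    ((Matrix.isUnit_iff_isUnit_det M).1 (Matrix.mulVec_injective_iff_isUnit.1 hinj))

lemma five_le_add (hk : M.det = 0 → finrank ℝ (LinearMap.ker M.mulVecLin) = 1) :
    5 ≤ negCard hM + posCard hM := by
  have hrank := rank_add_ker (M := M)
  have hr := rank_eq_add hM
  by_cases hdet : M.det = 0
  · have hk1 := hk hdet
    omega
  · have hu : IsUnit M := (Matrix.isUnit_iff_isUnit_det M).2 (isUnit_iff_ne_zero.2 hdet)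
    have hinj : Function.Injective M.mulVec := Matrix.mulVec_injective_iff_isUnit.2 hu
    have hbot : LinearMap.ker M.mulVecLin = ⊥ := LinearMap.ker_eq_bot.2 hinj
    have h0 : finrank ℝ (LinearMap.ker M.mulVecLin) = 0 := by rw [hbot]; simp
    omega

end SigAux

end

open SigAux in
/-- Let `A : [0,1] → M₆(ℝ)` be a continuous path of symmetric matrices
whose determinant vanishes at only finitely many `t`, with one-dimensional kernel at each
such `t`.  If `A 0` has exactly one negative eigenvalue and `A 1` has exactly five, then
some `A t` is invertible of signature `(3,3)`. -/
theorem signature_intermediate_value (A : ℝ → Matrix (Fin 6) (Fin 6) ℝ)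
    (hcont : ContinuousOn A (Set.Icc 0 1))
    (hsymm : ∀ t ∈ Set.Icc (0 : ℝ) 1, (A t).IsHermitian)
    (hfin : {t ∈ Set.Icc (0 : ℝ) 1 | (A t).det = 0}.Finite)
    (hker : ∀ t ∈ Set.Icc (0 : ℝ) 1, (A t).det = 0 →
      Module.finrank ℝ (LinearMap.ker (A t).mulVecLin) = 1)
    (h0 : (Finset.univ.filter fun i =>
      (hsymm 0 (by norm_num)).eigenvalues i < 0).card = 1)
    (h1 : (Finset.univ.filter fun i =>
      (hsymm 1 (by norm_num)).eigenvalues i < 0).card = 5) :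
    ∃ t, ∃ ht : t ∈ Set.Icc (0 : ℝ) 1, (A t).det ≠ 0 ∧
      (Finset.univ.filter fun i => (hsymm t ht).eigenvalues i < 0).card = 3 ∧
      (Finset.univ.filter fun i => 0 < (hsymm t ht).eigenvalues i).card = 3 := by
  by_contra hcon
  push_neg at hcon
  have key1 : ∀ t (ht : t ∈ Set.Icc (0:ℝ) 1),
      ¬(3 ≤ negCard (hsymm t ht) ∧ 3 ≤ posCard (hsymm t ht)) := by
    rintro t ht ⟨hn, hp⟩
    have htot := total_card (hsymm t ht)
    have h6 : negCard (hsymm t ht) + posCard (hsymm t ht) = 6 := by omega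
    have hdet := det_ne_zero_of_add_eq_six (hsymm t ht) h6
    have h3n : negCard (hsymm t ht) = 3 := by omega
    have h3p : posCard (hsymm t ht) = 3 := by omega
    exact hcon t ht hdet h3n h3p
  have key2 : ∀ t (ht : t ∈ Set.Icc (0:ℝ) 1),
      5 ≤ negCard (hsymm t ht) + posCard (hsymm t ht) :=
    fun t ht => five_le_add (hsymm t ht) (hker t ht)
  have keyP : ∀ t (ht : t ∈ Set.Icc (0:ℝ) 1), 3 ≤ posCard (hsymm t ht) →
      ∃ O : Set ℝ, IsOpen O ∧ t ∈ O ∧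
        ∀ s, s ∈ O → ∀ hs : s ∈ Set.Icc (0:ℝ) 1, 3 ≤ posCard (hsymm s hs) := by
    intro t ht h3
    have hev := (hcont t ht).eventually (eventually_posCard_le (hsymm t ht))
    rw [eventually_nhdsWithin_iff] at hev
    obtain ⟨O, hO1, hO2, hO3⟩ := eventually_nhds_iff.1 hev
    exact ⟨O, hO2, hO3, fun s hsO hs => le_trans h3 (hO1 s hsO hs (hsymm s hs))⟩
  have keyN : ∀ t (ht : t ∈ Set.Icc (0:ℝ) 1), 3 ≤ negCard (hsymm t ht) →
      ∃ O : Set ℝ, IsOpen O ∧ t ∈ O ∧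
        ∀ s, s ∈ O → ∀ hs : s ∈ Set.Icc (0:ℝ) 1, 3 ≤ negCard (hsymm s hs) := by
    intro t ht h3
    have hev := (hcont t ht).eventually (eventually_negCard_le (hsymm t ht))
    rw [eventually_nhdsWithin_iff] at hev
    obtain ⟨O, hO1, hO2, hO3⟩ := eventually_nhds_iff.1 hev
    exact ⟨O, hO2, hO3, fun s hsO hs => le_trans h3 (hO1 s hsO hs (hsymm s hs))⟩
  set u : Set ℝ := {x | ∃ O : Set ℝ, IsOpen O ∧ x ∈ O ∧
    ∀ s, s ∈ O → ∀ hs : s ∈ Set.Icc (0:ℝ) 1, 3 ≤ posCard (hsymm s hs)} with hu_def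
  set v : Set ℝ := {x | ∃ O : Set ℝ, IsOpen O ∧ x ∈ O ∧
    ∀ s, s ∈ O → ∀ hs : s ∈ Set.Icc (0:ℝ) 1, 3 ≤ negCard (hsymm s hs)} with hv_def
  have hu : IsOpen u := by
    rw [isOpen_iff_forall_mem_open]
    rintro x ⟨O, hO, hxO, hprop⟩
    exact ⟨O, fun y hy => ⟨O, hO, hy, hprop⟩, hO, hxO⟩
  have hv : IsOpen v := by
    rw [isOpen_iff_forall_mem_open]
    rintro x ⟨O, hO, hxO, hprop⟩
    exact ⟨O, fun y hy => ⟨O, hO, hy, hprop⟩, hO, hxO⟩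
  have hsub : Set.Icc (0:ℝ) 1 ⊆ u ∪ v := by
    intro t ht
    rcases le_or_gt 3 (posCard (hsymm t ht)) with h3 | h3
    · obtain ⟨O, hO, hxO, hprop⟩ := keyP t ht h3
      exact Or.inl ⟨O, hO, hxO, hprop⟩
    · have h3n : 3 ≤ negCard (hsymm t ht) := by have := key2 t ht; omega
      obtain ⟨O, hO, hxO, hprop⟩ := keyN t ht h3n
      exact Or.inr ⟨O, hO, hxO, hprop⟩
  have ht0 : (0:ℝ) ∈ Set.Icc (0:ℝ) 1 := by norm_num
  have ht1 : (1:ℝ) ∈ Set.Icc (0:ℝ) 1 := by norm_num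
  have h0' : negCard (hsymm 0 ht0) = 1 := h0
  have h1' : negCard (hsymm 1 ht1) = 5 := h1
  have hne1 : (Set.Icc (0:ℝ) 1 ∩ u).Nonempty := by
    refine ⟨0, ht0, ?_⟩
    have h3 : 3 ≤ posCard (hsymm 0 ht0) := by have := key2 0 ht0; omega
    obtain ⟨O, hO, hxO, hprop⟩ := keyP 0 ht0 h3
    exact ⟨O, hO, hxO, hprop⟩
  have hne2 : (Set.Icc (0:ℝ) 1 ∩ v).Nonempty := by
    refine ⟨1, ht1, ?_⟩
    have h3 : 3 ≤ negCard (hsymm 1 ht1) := by omega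
    obtain ⟨O, hO, hxO, hprop⟩ := keyN 1 ht1 h3
    exact ⟨O, hO, hxO, hprop⟩
  obtain ⟨s, hsI, hsu, hsv⟩ := isPreconnected_Icc u v hu hv hsub hne1 hne2
  obtain ⟨O1, hO1, hsO1, hp1⟩ := hsu
  obtain ⟨O2, hO2, hsO2, hp2⟩ := hsv
  exact key1 s hsI ⟨hp2 s hsO2 hsI, hp1 s hsO1 hsI⟩
end
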